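/- arXiv:1608.00124 — 6 statements merged into one kernel-verified Lean document; each statement's English description precedes it below -/
import Mathlib

section
/- Let H be a Hermitian operator on a finite-dimensional Hilbert space with eigenvalues ε_1 ≤ ε_2 ≤ ... ≤ ε_d (with orthonormal eigenvectors |ε_k⟩), and let ρ be a density operator with eigenvalues r_1 ≥ r_2 ≥ ... ≥ r_d (with orthonormal eigenvectors |r_k⟩). Then the ergotropy W(ρ) = Σ_{j,k} r_k ε_j (|⟨ε_j|r_k⟩|² − δ_{jk}) is nonnegative. -/
open Matrix Kronecker BigOperators ComplexOrder

noncomputable section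

/-- Partial trace over the second (ancilla) factor. -/
def ptrA {d m : ℕ} (ρ : Matrix (Fin d × Fin m) (Fin d × Fin m) ℂ) :
    Matrix (Fin d) (Fin d) ℂ := fun i j => ∑ a, ρ (i, a) (j, a)

/-- Partial trace over the first (system) factor. -/
def ptrS {d m : ℕ} (ρ : Matrix (Fin d × Fin m) (Fin d × Fin m) ℂ) :
    Matrix (Fin m) (Fin m) ℂ := fun x y => ∑ i, ρ (i, x) (i, y)

/-- Probability of outcome corresponding to ancilla projector `P`. -/
def outcomeProb {d m : ℕ} (ρ : Matrix (Fin d × Fin m) (Fin d × Fin m) ℂ)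
    (P : Matrix (Fin m) (Fin m) ℂ) : ℝ :=
  ((((1 : Matrix (Fin d) (Fin d) ℂ)) ⊗ₖ P) * ρ).trace.re

/-- Normalized conditional state of the system after ancilla outcome `P`. -/
def condState {d m : ℕ} (ρ : Matrix (Fin d × Fin m) (Fin d × Fin m) ℂ)
    (P : Matrix (Fin m) (Fin m) ℂ) : Matrix (Fin d) (Fin d) ℂ :=
  (outcomeProb ρ P)⁻¹ •
    ptrA (((1 : Matrix (Fin d) (Fin d) ℂ) ⊗ₖ P) * ρ *
      ((1 : Matrix (Fin d) (Fin d) ℂ) ⊗ₖ P))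

/-- Passive energy `∑ₖ rₖ εₖ`: decreasing eigenvalues of `σ` paired with the
increasingly ordered energies `ε`. -/
def passiveEnergy {d : ℕ} (ε : Fin d → ℝ) (σ : Matrix (Fin d) (Fin d) ℂ) : ℝ :=
  if h : σ.IsHermitian then
    ∑ k, (h.eigenvalues ∘ (Tuple.sort h.eigenvalues)) k.rev * ε k
  else 0

/-- The daemonic gain `δW`: supremum over complete projective ancilla
measurements of `W_{Π} - W`. -/
def deltaW {d m : ℕ} (ε : Fin d → ℝ)
    (ρ : Matrix (Fin d × Fin m) (Fin d × Fin m) ℂ) : ℝ :=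
  sSup {g : ℝ | ∃ (n : ℕ) (P : Fin n → Matrix (Fin m) (Fin m) ℂ),
    (∀ a, (P a).IsHermitian) ∧ (∀ a b, P a * P b = if a = b then P a else 0) ∧
    (∑ a, P a = 1) ∧
    g = passiveEnergy ε (ptrA ρ) -
      ∑ a, outcomeProb ρ (P a) * passiveEnergy ε (condState ρ (P a))}

end

lemma orthonormal_sum_sq {d : ℕ} (w : Fin d → Fin d → ℂ)
    (hw : ∀ j k, star (w j) ⬝ᵥ w k = if j = k then (1:ℂ) else 0)
    (x : Fin d → ℂ) (hx : star x ⬝ᵥ x = 1) :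
    ∑ k, ‖star (w k) ⬝ᵥ x‖ ^ 2 = 1 := by
  classical
  set M : Matrix (Fin d) (Fin d) ℂ := Matrix.of w with hM
  have h1 : M * Mᴴ = 1 := by
    ext j k
    have h := hw k j
    simp only [dotProduct, Pi.star_apply, RCLike.star_def] at h
    simp only [Matrix.mul_apply, Matrix.conjTranspose_apply, Matrix.one_apply, hM,
      Matrix.of_apply, Complex.star_def]
    rw [show ∑ i, w j i * (starRingEnd ℂ) (w k i)
        = ∑ i, (starRingEnd ℂ) (w k i) * w j i from
      Finset.sum_congr rfl fun i _ => mul_comm _ _, h]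
    simp [eq_comm]
  have h2 : Mᴴ * M = 1 := mul_eq_one_comm.mp h1
  have key : ∀ i i' : Fin d,
      ∑ k, (starRingEnd ℂ) (w k i) * w k i' = if i = i' then (1:ℂ) else 0 := by
    intro i i'
    have h := congrFun (congrFun h2 i) i'
    simpa [Matrix.mul_apply, Matrix.conjTranspose_apply, Matrix.one_apply, hM] using h
  have hsum : (∑ k, ((star (w k) ⬝ᵥ x) * (starRingEnd ℂ) (star (w k) ⬝ᵥ x))) = 1 := by
    have hterm : ∀ k, (star (w k) ⬝ᵥ x) * (starRingEnd ℂ) (star (w k) ⬝ᵥ x)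
        = ∑ i, ∑ i', ((starRingEnd ℂ) (w k i) * w k i') * (x i * (starRingEnd ℂ) (x i')) := by
      intro k
      simp only [dotProduct, Pi.star_apply, RCLike.star_def, map_sum, _root_.map_mul,
        RingHomCompTriple.comp_apply, RingHom.id_apply, Complex.conj_conj]
      rw [Finset.sum_mul_sum]
      refine Finset.sum_congr rfl fun i _ => Finset.sum_congr rfl fun i' _ => ?_
      ring
    calc (∑ k, ((star (w k) ⬝ᵥ x) * (starRingEnd ℂ) (star (w k) ⬝ᵥ x)))
        = ∑ k : Fin d, ∑ i, ∑ i', ((starRingEnd ℂ) (w k i) * w k i') * (x i * (starRingEnd ℂ) (x i')) := by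
          exact Finset.sum_congr rfl fun k _ => hterm k
      _ = ∑ i, ∑ i', ∑ k : Fin d, ((starRingEnd ℂ) (w k i) * w k i') * (x i * (starRingEnd ℂ) (x i')) := by
          rw [Finset.sum_comm]
          exact Finset.sum_congr rfl fun i _ => Finset.sum_comm
      _ = ∑ i, ∑ i', (if i = i' then (1:ℂ) else 0) * (x i * (starRingEnd ℂ) (x i')) := by
          refine Finset.sum_congr rfl fun i _ => Finset.sum_congr rfl fun i' _ => ?_
          rw [← Finset.sum_mul, key]
      _ = ∑ i, x i * (starRingEnd ℂ) (x i) := by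
          simp
      _ = 1 := by
          rw [← hx]
          simp only [dotProduct, Pi.star_apply, RCLike.star_def]
          exact Finset.sum_congr rfl fun i _ => mul_comm _ _
  have h3 : ∑ k, ‖star (w k) ⬝ᵥ x‖ ^ 2
      = ∑ k, Complex.normSq (star (w k) ⬝ᵥ x) := by
    simp [Complex.sq_norm]
  have h4 : ((∑ k, Complex.normSq (star (w k) ⬝ᵥ x) : ℝ) : ℂ) = 1 := by
    push_cast
    simp_rw [← Complex.mul_conj]
    exact hsum
  rw [h3]
  exact_mod_cast h4

/-- the ergotropy W(ρ) = ∑_{j,k} rₖ εⱼ (|⟨εⱼ|rₖ⟩|² − δⱼₖ) is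
nonnegative, where ε are the increasingly ordered eigenvalues of a Hermitian H
with orthonormal eigenvectors e, and r are the decreasingly ordered eigenvalues
of a density operator with orthonormal eigenvectors v. -/
theorem ergotropy_nonneg {d : ℕ} (ε r : Fin d → ℝ)
    (hε : Monotone ε) (hr : Antitone r)
    (hr0 : ∀ k, 0 ≤ r k) (hr1 : ∑ k, r k = 1)
    (e v : Fin d → Fin d → ℂ)
    (he : ∀ j k, star (e j) ⬝ᵥ e k = if j = k then (1 : ℂ) else 0)
    (hv : ∀ j k, star (v j) ⬝ᵥ v k = if j = k then (1 : ℂ) else 0) :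
    0 ≤ ∑ j, ∑ k, r k * ε j *
      (‖star (e j) ⬝ᵥ v k‖ ^ 2 - if j = k then 1 else 0) := by
  classical
  rcases Nat.eq_zero_or_pos d with hd | hd
  · subst hd; simp
  set D : Fin d → Fin d → ℝ := fun j k => ‖star (e j) ⬝ᵥ v k‖ ^ 2 with hDdef
  show 0 ≤ ∑ j, ∑ k, r k * ε j * (D j k - if j = k then 1 else 0)
  have hD0 : ∀ j k, 0 ≤ D j k := fun j k => by positivity
  have habs : ∀ (a b : Fin d → ℂ),
      ‖star a ⬝ᵥ b‖ = ‖star b ⬝ᵥ a‖ := by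
    intro a b
    have h : star b ⬝ᵥ a = (starRingEnd ℂ) (star a ⬝ᵥ b) := by
      simp only [dotProduct, Pi.star_apply, Complex.star_def, map_sum, _root_.map_mul,
        Complex.conj_conj]
      exact Finset.sum_congr rfl fun i _ => mul_comm _ _
    rw [h, Complex.norm_conj]
  have hrow : ∀ j, ∑ k, D j k = 1 := by
    intro j
    have h1 := orthonormal_sum_sq v hv (e j) (by simpa using he j j)
    rw [← h1]
    exact Finset.sum_congr rfl fun k _ => by rw [hDdef]; rw [habs]
  have hcol : ∀ k, ∑ j, D j k = 1 := by
    intro k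
    exact orthonormal_sum_sq e he (v k) (by simpa using hv k k)
  set g : ℕ → ℝ := fun i => if h : i + 1 < d then
      ε ⟨i+1, h⟩ - ε ⟨i, Nat.lt_of_succ_lt h⟩ else 0 with hgdef
  have hg0 : ∀ i, 0 ≤ g i := by
    intro i
    rw [hgdef]
    dsimp only
    split
    · exact sub_nonneg.mpr (hε (by simp [Fin.mk_le_mk]))
    · exact le_refl 0
  have heps : ∀ j : Fin d, ε j = ε ⟨0, hd⟩ + ∑ i ∈ Finset.range j.val, g i := by
    have main : ∀ jv (hj : jv < d),
        ε ⟨jv, hj⟩ = ε ⟨0, hd⟩ + ∑ i ∈ Finset.range jv, g i := by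
      intro jv
      induction jv with
      | zero => intro hj; simp
      | succ n ih =>
        intro hj
        have hn : n < d := Nat.lt_of_succ_lt hj
        have hgn : g n = ε ⟨n+1, hj⟩ - ε ⟨n, hn⟩ := by rw [hgdef]; simp [hj]
        rw [Finset.sum_range_succ, ← add_assoc, ← ih hn, hgn]
        ring
    intro j
    simpa using main j.val j.isLt
  have hext : ∀ (m : ℕ), m ≤ d → ∀ (f : ℕ → ℝ),
      ∑ i ∈ Finset.range m, f i = ∑ i ∈ Finset.range d, if i < m then f i else 0 := by
    intro m hm f
    rw [Finset.sum_ite, Finset.sum_const_zero, add_zero]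
    congr 1
    ext i
    simp only [Finset.mem_filter, Finset.mem_range]
    omega
  -- Step A
  have hA : ∑ k, r k * ε k
      = ε ⟨0, hd⟩ + ∑ i ∈ Finset.range d, g i * ∑ k : Fin d, (if i < k.val then r k else 0) := by
    calc ∑ k, r k * ε k
        = ∑ k : Fin d, (r k * ε ⟨0, hd⟩
            + ∑ i ∈ Finset.range d, (if i < k.val then r k * g i else 0)) := by
          refine Finset.sum_congr rfl fun k _ => ?_
          rw [heps k, mul_add, Finset.mul_sum, hext k.val k.isLt.le (fun i => r k * g i)]
      _ = ε ⟨0, hd⟩ + ∑ i ∈ Finset.range d, g i * ∑ k : Fin d, (if i < k.val then r k else 0) := by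
          rw [Finset.sum_add_distrib, ← Finset.sum_mul, hr1, one_mul, Finset.sum_comm]
          congr 1
          refine Finset.sum_congr rfl fun i _ => ?_
          rw [Finset.mul_sum]
          refine Finset.sum_congr rfl fun k _ => ?_
          split <;> simp [mul_comm]
  -- Step B
  have hB : ∑ j, ∑ k, r k * ε j * D j k
      = ε ⟨0, hd⟩ + ∑ i ∈ Finset.range d,
          g i * ∑ k : Fin d, r k * (∑ j : Fin d, if i < j.val then D j k else 0) := by
    calc ∑ j, ∑ k, r k * ε j * D j k
        = ∑ j : Fin d, ∑ k : Fin d, (r k * D j k * ε ⟨0, hd⟩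
            + ∑ i ∈ Finset.range d, (if i < j.val then g i * (r k * D j k) else 0)) := by
          refine Finset.sum_congr rfl fun j _ => Finset.sum_congr rfl fun k _ => ?_
          rw [heps j, hext j.val j.isLt.le g]
          rw [show r k * (ε ⟨0, hd⟩ + ∑ i ∈ Finset.range d, if i < (j:ℕ) then g i else 0) * D j k
              = r k * D j k * ε ⟨0, hd⟩
                + (∑ i ∈ Finset.range d, if i < (j:ℕ) then g i else 0) * (r k * D j k) from by
            ring]
          congr 1
          rw [Finset.sum_mul]
          refine Finset.sum_congr rfl fun i _ => ?_
          split <;> ring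
      _ = (∑ j : Fin d, ∑ k : Fin d, r k * D j k * ε ⟨0, hd⟩)
          + ∑ j : Fin d, ∑ k : Fin d, ∑ i ∈ Finset.range d,
              (if i < j.val then g i * (r k * D j k) else 0) := by
          rw [← Finset.sum_add_distrib]
          exact Finset.sum_congr rfl fun j _ => Finset.sum_add_distrib
      _ = ε ⟨0, hd⟩ + ∑ i ∈ Finset.range d,
          g i * ∑ k : Fin d, r k * (∑ j : Fin d, if i < j.val then D j k else 0) := by
          congr 1
          · rw [Finset.sum_comm]
            have h1 : ∀ k : Fin d, ∑ j : Fin d, r k * D j k * ε ⟨0, hd⟩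
                = r k * ε ⟨0, hd⟩ := by
              intro k
              rw [Finset.sum_congr rfl fun j _ =>
                show r k * D j k * ε ⟨0, hd⟩ = D j k * (r k * ε ⟨0, hd⟩) from by ring,
                ← Finset.sum_mul, hcol k, one_mul]
            rw [Finset.sum_congr rfl fun k _ => h1 k, ← Finset.sum_mul, hr1, one_mul]
          · rw [Finset.sum_comm]
            rw [Finset.sum_congr rfl fun k (_ : k ∈ Finset.univ) => Finset.sum_comm]
            rw [Finset.sum_comm]
            refine Finset.sum_congr rfl fun i _ => ?_
            rw [Finset.mul_sum]
            refine Finset.sum_congr rfl fun k _ => ?_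
            rw [Finset.mul_sum, Finset.mul_sum]
            refine Finset.sum_congr rfl fun j _ => ?_
            split <;> ring
  -- the key inequality
  have key : ∑ k, r k * ε k ≤ ∑ j, ∑ k, r k * ε j * D j k := by
    rw [hA, hB]
    refine add_le_add (le_refl _) (Finset.sum_le_sum fun i _ => ?_)
    rcases lt_or_ge (i+1) d with hi1 | hi1
    · refine mul_le_mul_of_nonneg_left ?_ (hg0 i)
      set t := r ⟨i+1, hi1⟩ with htdef
      have hAk1 : ∀ k : Fin d, (∑ j : Fin d, if i < j.val then D j k else 0) ≤ 1 := by
        intro k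
        rw [← hcol k]
        refine Finset.sum_le_sum fun j _ => ?_
        split
        · exact le_refl _
        · exact hD0 j k
      have hAk0 : ∀ k : Fin d, 0 ≤ ∑ j : Fin d, if i < j.val then D j k else 0 := by
        intro k
        refine Finset.sum_nonneg fun j _ => ?_
        split
        · exact hD0 j k
        · exact le_refl 0
      have hsumA : ∑ k : Fin d, (∑ j : Fin d, if i < j.val then D j k else 0)
          = ∑ k : Fin d, (if i < k.val then (1:ℝ) else 0) := by
        rw [Finset.sum_comm]
        refine Finset.sum_congr rfl fun j _ => ?_
        by_cases hij : i < (j:ℕ) <;> simp [hij, hrow j]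
      calc ∑ k : Fin d, (if i < k.val then r k else 0)
          = ∑ k : Fin d, (t * (∑ j : Fin d, if i < j.val then D j k else 0)
              - t * (if i < k.val then (1:ℝ) else 0) + (if i < k.val then r k else 0)) := by
            rw [Finset.sum_add_distrib, Finset.sum_sub_distrib, ← Finset.mul_sum,
              ← Finset.mul_sum, hsumA]
            ring
        _ ≤ ∑ k : Fin d, r k * (∑ j : Fin d, if i < j.val then D j k else 0) := by
            refine Finset.sum_le_sum fun k _ => ?_
            by_cases hik : i < (k:ℕ)
            · have hrk : r k ≤ t := hr (by simp only [Fin.le_def]; omega)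
              have h1 := hAk1 k
              simp only [hik, if_true]
              nlinarith
            · have hrk : t ≤ r k := hr (by simp only [Fin.le_def]; omega)
              have h0 := hAk0 k
              simp only [hik, if_false]
              nlinarith
    · have hgi : g i = 0 := by rw [hgdef]; simp [Nat.not_lt.mpr hi1]
      rw [hgi]
      simp
  -- split the goal
  have hsplit : ∑ j, ∑ k, r k * ε j * (D j k - if j = k then 1 else 0)
      = (∑ j, ∑ k, r k * ε j * D j k) - ∑ k, r k * ε k := by
    rw [← Finset.sum_sub_distrib]
    refine Finset.sum_congr rfl fun j _ => ?_
    have h2 : ∑ k : Fin d, (r k * ε j * (D j k - if j = k then 1 else 0))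
        = ∑ k : Fin d, (r k * ε j * D j k - if j = k then r k * ε j else 0) := by
      refine Finset.sum_congr rfl fun k _ => ?_
      split <;> ring
    rw [h2, Finset.sum_sub_distrib]
    simp
  rw [hsplit]
  linarith [key]
end

section
/- Concavity of the passive energy: for a Hermitian H on ℂ^d with increasingly ordered eigenvalues ε_1 ≤ ... ≤ ε_d, define E_pass(ρ) = Σ_k r_k(ρ) ε_k, where r_k(ρ) are the eigenvalues of the density operator ρ in decreasing order. Then for any probability weights p_a and density operators ρ_a, E_pass(Σ_a p_a ρ_a) ≥ Σ_a p_a E_pass(ρ_a). -/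
open Matrix Kronecker BigOperators ComplexOrder

section AuxConcavity

open Finset

/-- Bathtub principle: a `[0,1]`-valued weight of total mass `m` integrated against a
monotone function is at least the sum of the `m` smallest values. -/
private lemma bathtub {d : ℕ} (s : Fin d → ℝ) (hs : Monotone s) (t : Fin d → ℝ)
    (ht0 : ∀ i, 0 ≤ t i) (ht1 : ∀ i, t i ≤ 1) (m : ℕ) (hm : m ≤ d)
    (htm : ∑ i, t i = m) :
    ∑ k : Fin m, s (Fin.castLE hm k) ≤ ∑ i, s i * t i := by
  rcases Nat.eq_zero_or_pos m with h0 | h0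
  · subst h0
    have hz : ∀ i ∈ Finset.univ, t i = 0 := by
      intro i _
      have := (Finset.sum_eq_zero_iff_of_nonneg (fun i _ => ht0 i)).mp (by simpa using htm)
      exact this i (Finset.mem_univ i)
    simp only [Finset.univ_eq_empty, Finset.sum_empty]
    rw [Finset.sum_congr rfl (fun i hi => by rw [hz i hi, mul_zero])]
    simp
  · have hm1 : m - 1 < d := lt_of_lt_of_le (Nat.pred_lt h0.ne') hm
    set μ := s ⟨m - 1, hm1⟩ with hμ
    have key : ∀ i : Fin d, min (s i - μ) 0 ≤ (s i - μ) * t i := by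
      intro i
      rcases le_total (s i) μ with h | h
      · rw [min_eq_left (by linarith)]
        nlinarith [ht0 i, ht1 i]
      · exact le_trans (min_le_right _ _) (mul_nonneg (by linarith) (ht0 i))
    have hmin : ∀ i : Fin d, min (s i - μ) 0 = if (i : ℕ) < m then s i - μ else 0 := by
      intro i
      split
      · next h =>
        have : i ≤ ⟨m - 1, hm1⟩ := by
          rw [Fin.le_def]; exact Nat.le_pred_of_lt h
        exact min_eq_left (by linarith [hs this])
      · next h =>
        have : (⟨m - 1, hm1⟩ : Fin d) ≤ i := by
          rw [Fin.le_def]; exact le_trans (Nat.pred_le m) (le_of_not_gt h)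
        exact min_eq_right (by linarith [hs this])
    have hfil : Finset.filter (fun i : Fin d => (i : ℕ) < m) Finset.univ
        = Finset.map (Fin.castLEEmb hm) Finset.univ := by
      ext i
      simp only [Finset.mem_filter, Finset.mem_univ, true_and, Finset.mem_map,
        Fin.castLEEmb_apply]
      constructor
      · intro h; exact ⟨⟨(i : ℕ), h⟩, Fin.ext rfl⟩
      · rintro ⟨k, rfl⟩; exact k.isLt
    have hminsum : ∑ i : Fin d, min (s i - μ) 0
        = ∑ k : Fin m, (s (Fin.castLE hm k) - μ) := by
      rw [Finset.sum_congr rfl (fun i _ => hmin i), ← Finset.sum_filter, hfil,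
        Finset.sum_map]
      simp [Fin.castLEEmb]
    have h1 : ∑ i : Fin d, min (s i - μ) 0 ≤ ∑ i, (s i - μ) * t i :=
      Finset.sum_le_sum (fun i _ => key i)
    have h2 : ∑ i : Fin d, (s i - μ) * t i = (∑ i, s i * t i) - μ * m := by
      rw [← htm]
      rw [Finset.mul_sum, ← Finset.sum_sub_distrib]
      exact Finset.sum_congr rfl (fun i _ => by ring)
    have h3 : ∑ k : Fin m, (s (Fin.castLE hm k) - μ)
        = (∑ k : Fin m, s (Fin.castLE hm k)) - μ * m := by
      rw [Finset.sum_sub_distrib, Finset.sum_const, Finset.card_univ, Fintype.card_fin,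
        nsmul_eq_mul]
      ring
    rw [hminsum, h3, h2] at h1
    linarith

/-- Abel summation / majorization: if the partial sums of `f` dominate those of `s`
with equal total sums, then pairing against an antitone weight favours `f`. -/
private lemma abel_maj {d : ℕ} (η f s : Fin d → ℝ) (hη : Antitone η)
    (hmaj : ∀ (m : ℕ) (hm : m ≤ d),
      ∑ k : Fin m, s (Fin.castLE hm k) ≤ ∑ k : Fin m, f (Fin.castLE hm k))
    (htot : ∑ k, f k = ∑ k, s k) :
    ∑ k, η k * s k ≤ ∑ k, η k * f k := by
  rcases Nat.eq_zero_or_pos d with h0 | h0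
  · subst h0; simp
  set g : ℕ → ℝ := fun k => if h : k < d then f ⟨k, h⟩ - s ⟨k, h⟩ else 0 with hg
  set e : ℕ → ℝ := fun k => if h : k < d then η ⟨k, h⟩ else 0 with he
  have hpart : ∀ (m : ℕ) (hm : m ≤ d),
      ∑ i ∈ Finset.range m, g i
        = (∑ k : Fin m, f (Fin.castLE hm k)) - ∑ k : Fin m, s (Fin.castLE hm k) := by
    intro m hm
    rw [← Fin.sum_univ_eq_sum_range, ← Finset.sum_sub_distrib]
    refine Finset.sum_congr rfl fun k _ => ?_
    have hk : (k : ℕ) < d := lt_of_lt_of_le k.isLt hm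
    simp only [hg, dif_pos hk]
    rfl
  have hGnn : ∀ (m : ℕ), m ≤ d → 0 ≤ ∑ i ∈ Finset.range m, g i := by
    intro m hm
    rw [hpart m hm]
    exact sub_nonneg.2 (hmaj m hm)
  have hGd : ∑ i ∈ Finset.range d, g i = 0 := by
    rw [hpart d le_rfl]
    rw [sub_eq_zero]
    rw [Finset.sum_congr rfl
        (fun k (_ : k ∈ Finset.univ) => congrArg f (Fin.ext rfl : Fin.castLE le_rfl k = k)),
      Finset.sum_congr rfl
        (fun k (_ : k ∈ Finset.univ) => congrArg s (Fin.ext rfl : Fin.castLE le_rfl k = k))]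
    exact htot
  have main : 0 ≤ ∑ i ∈ Finset.range d, e i • g i := by
    rw [Finset.sum_range_by_parts e g d, hGd, smul_zero, zero_sub, neg_nonneg]
    apply Finset.sum_nonpos
    intro i hi
    rw [Finset.mem_range] at hi
    have hi1 : i + 1 < d := by omega
    have hi0 : i < d := by omega
    have he1 : e (i + 1) - e i ≤ 0 := by
      simp only [he, dif_pos hi1, dif_pos hi0, sub_nonpos]
      exact hη (by simp [Fin.le_def])
    rw [smul_eq_mul]
    exact mul_nonpos_iff.mpr (Or.inr ⟨he1, hGnn (i + 1) (by omega)⟩)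
  have conv : ∑ i ∈ Finset.range d, e i • g i = (∑ k, η k * f k) - ∑ k, η k * s k := by
    rw [← Fin.sum_univ_eq_sum_range, ← Finset.sum_sub_distrib]
    refine Finset.sum_congr rfl fun k _ => ?_
    have hk : (k : ℕ) < d := k.isLt
    simp only [he, hg, dif_pos hk, smul_eq_mul]
    have : (⟨(k : ℕ), hk⟩ : Fin d) = k := Fin.ext rfl
    rw [this]; ring
  linarith [conv ▸ main]

private lemma sum_swap4 {M : Type*} [AddCommMonoid M] {a b c e : Type*}
    [Fintype a] [Fintype b] [Fintype c] [Fintype e] (f : a → b → c → e → M) :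
    ∑ i, ∑ j, ∑ k, ∑ l, f i j k l = ∑ k, ∑ l, ∑ i, ∑ j, f i j k l := by
  trans ∑ i, ∑ k, ∑ j, ∑ l, f i j k l
  · exact Finset.sum_congr rfl fun i _ => Finset.sum_comm
  trans ∑ k, ∑ i, ∑ j, ∑ l, f i j k l
  · exact Finset.sum_comm
  trans ∑ k, ∑ i, ∑ l, ∑ j, f i j k l
  · exact Finset.sum_congr rfl fun k _ => Finset.sum_congr rfl fun i _ => Finset.sum_comm
  · exact Finset.sum_congr rfl fun k _ => Finset.sum_comm

/-- Pairing an antitone weight with a monotone function through a doubly stochastic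
kernel only increases the value compared to the direct (oppositely ordered) pairing. -/
private lemma ds_rearrange {d : ℕ} (η s : Fin d → ℝ) (hη : Antitone η) (hs : Monotone s)
    (D : Fin d → Fin d → ℝ) (hD0 : ∀ k l, 0 ≤ D k l)
    (hrow : ∀ k, ∑ l, D k l = 1) (hcol : ∀ l, ∑ k, D k l = 1) :
    ∑ k, η k * s k ≤ ∑ k, ∑ l, η k * s l * D k l := by
  have hre : ∀ k, ∑ l, η k * s l * D k l = η k * ∑ l, s l * D k l := by
    intro k; rw [Finset.mul_sum]; exact Finset.sum_congr rfl fun l _ => by ring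
  rw [Finset.sum_congr rfl fun k _ => hre k]
  set f : Fin d → ℝ := fun k => ∑ l, s l * D k l with hf
  have hmaj : ∀ (m : ℕ) (hm : m ≤ d),
      ∑ k : Fin m, s (Fin.castLE hm k) ≤ ∑ k : Fin m, f (Fin.castLE hm k) := by
    intro m hm
    have hswap : ∑ k : Fin m, f (Fin.castLE hm k)
        = ∑ l, s l * (∑ k : Fin m, D (Fin.castLE hm k) l) := by
      rw [Finset.sum_comm]
      exact Finset.sum_congr rfl fun l _ => by rw [Finset.mul_sum]
    rw [hswap]
    set t : Fin d → ℝ := fun l => ∑ k : Fin m, D (Fin.castLE hm k) l with ht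
    have ht0 : ∀ l, 0 ≤ t l := fun l => Finset.sum_nonneg fun k _ => hD0 _ _
    have ht1 : ∀ l, t l ≤ 1 := by
      intro l
      rw [← hcol l]
      have : ∑ k : Fin m, D (Fin.castLE hm k) l
          = ∑ k ∈ Finset.map (Fin.castLEEmb hm) Finset.univ, D k l := by
        rw [Finset.sum_map]; rfl
      show ∑ k : Fin m, D (Fin.castLE hm k) l ≤ _
      rw [this]
      exact Finset.sum_le_sum_of_subset_of_nonneg (Finset.subset_univ _)
        (fun k _ _ => hD0 k l)
    have htm : ∑ l, t l = m := by
      rw [Finset.sum_comm]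
      rw [Finset.sum_congr rfl fun k (_ : k ∈ Finset.univ) => hrow (Fin.castLE hm k)]
      simp
    exact bathtub s hs t ht0 ht1 m hm htm
  have htot : ∑ k, f k = ∑ k, s k := by
    rw [Finset.sum_comm]
    refine Finset.sum_congr rfl fun l _ => ?_
    rw [← Finset.mul_sum, hcol l, mul_one]
  exact abel_maj η f s hη hmaj htot

/-- Spectral decomposition data of a Hermitian matrix, with eigenvalues sorted
increasingly: an orthonormal family of eigenvectors. -/
private lemma spectral_data {d : ℕ} {A : Matrix (Fin d) (Fin d) ℂ} (hA : A.IsHermitian) :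
    ∃ v : Fin d → Fin d → ℂ,
      (∀ k l, ∑ j, (starRingEnd ℂ) (v k j) * v l j = if k = l then 1 else 0) ∧
      (∀ i j, ∑ k, v k i * (starRingEnd ℂ) (v k j) = if i = j then 1 else 0) ∧
      (∀ i j, A i j = ∑ k,
        (((hA.eigenvalues ∘ Tuple.sort hA.eigenvalues) k : ℝ) : ℂ) * v k i
          * (starRingEnd ℂ) (v k j)) := by
  set U : Matrix (Fin d) (Fin d) ℂ := (hA.eigenvectorUnitary : Matrix (Fin d) (Fin d) ℂ)
    with hU
  set σ : Equiv.Perm (Fin d) := Tuple.sort hA.eigenvalues with hσ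
  have hmem := hA.eigenvectorUnitary.2
  have h1 : star U * U = 1 := (Unitary.mem_iff.mp hmem).1
  have h2 : U * star U = 1 := (Unitary.mem_iff.mp hmem).2
  refine ⟨fun k i => U i (σ k), ?_, ?_, ?_⟩
  · intro k l
    have := congrFun (congrFun h1 (σ k)) (σ l)
    simp only [Matrix.mul_apply, Matrix.star_apply, Matrix.one_apply] at this
    simp only [starRingEnd_apply]
    rw [this]
    simp [σ.injective.eq_iff]
  · intro i j
    have := congrFun (congrFun h2 i) j
    simp only [Matrix.mul_apply, Matrix.star_apply, Matrix.one_apply] at this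
    have hre : ∑ k, U i (σ k) * (starRingEnd ℂ) (U j (σ k))
        = ∑ m, U i m * (starRingEnd ℂ) (U j m) :=
      Equiv.sum_comp σ (fun m => U i m * (starRingEnd ℂ) (U j m))
    rw [hre]
    simp only [starRingEnd_apply]
    exact this
  · intro i j
    have hspec := hA.spectral_theorem
    have := congrFun (congrFun hspec i) j
    rw [this]
    have hofr : ∀ x : ℝ, (RCLike.ofReal x : ℂ) = (x : ℂ) := fun _ => rfl
    simp only [Unitary.conjStarAlgAut_apply, Matrix.mul_apply, Matrix.diagonal_apply, hofr, Matrix.star_apply,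
      Function.comp_apply, mul_ite, mul_zero, ite_mul, zero_mul,
      Finset.sum_ite_eq, Finset.sum_ite_eq', Finset.mem_univ, if_true]
    have hre : ∑ k, ((hA.eigenvalues (σ k) : ℝ) : ℂ) * U i (σ k)
          * (starRingEnd ℂ) (U j (σ k))
        = ∑ m, ((hA.eigenvalues m : ℝ) : ℂ) * U i m * (starRingEnd ℂ) (U j m) :=
      Equiv.sum_comp σ (fun m => ((hA.eigenvalues m : ℝ) : ℂ) * U i m
        * (starRingEnd ℂ) (U j m))
    rw [hre]
    refine Finset.sum_congr rfl fun m _ => ?_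
    simp only [starRingEnd_apply]
    ring

/-- Generalized overlap computation: the quadratic pairing of two spectral
decompositions reduces to eigenvalues weighted by squared overlaps. -/
private lemma key_trace {d : ℕ} (η sA : Fin d → ℝ) (v w : Fin d → Fin d → ℂ)
    (A : Matrix (Fin d) (Fin d) ℂ)
    (hA : ∀ i j, A i j = ∑ l, ((sA l : ℝ) : ℂ) * w l i * (starRingEnd ℂ) (w l j)) :
    ∑ i, ∑ j, (∑ k, ((η k : ℝ) : ℂ) * v k i * (starRingEnd ℂ) (v k j)) * A j i
      = ((∑ k, ∑ l, η k * sA l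
          * Complex.normSq (∑ j, (starRingEnd ℂ) (v k j) * w l j) : ℝ) : ℂ) := by
  have expand : ∀ i j : Fin d,
      (∑ k, ((η k : ℝ) : ℂ) * v k i * (starRingEnd ℂ) (v k j)) * A j i
        = ∑ k, ∑ l, (((η k : ℝ) : ℂ) * ((sA l : ℝ) : ℂ))
            * (((starRingEnd ℂ) (v k j) * w l j) * (v k i * (starRingEnd ℂ) (w l i))) := by
    intro i j
    rw [hA j i, Finset.sum_mul_sum]
    exact Finset.sum_congr rfl fun k _ => Finset.sum_congr rfl fun l _ => by ring
  rw [Finset.sum_congr rfl fun i (_ : i ∈ Finset.univ) =>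
    Finset.sum_congr rfl fun j (_ : j ∈ Finset.univ) => expand i j]
  rw [sum_swap4 (fun i j k l => (((η k : ℝ) : ℂ) * ((sA l : ℝ) : ℂ))
      * (((starRingEnd ℂ) (v k j) * w l j) * (v k i * (starRingEnd ℂ) (w l i))))]
  rw [Complex.ofReal_sum]
  refine Finset.sum_congr rfl fun k _ => ?_
  rw [Complex.ofReal_sum]
  refine Finset.sum_congr rfl fun l _ => ?_
  set c : ℂ := ∑ j, (starRingEnd ℂ) (v k j) * w l j with hc
  have hconj : (starRingEnd ℂ) c = ∑ i, v k i * (starRingEnd ℂ) (w l i) := by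
    rw [hc, map_sum]
    exact Finset.sum_congr rfl fun i _ => by
      rw [RingHom.map_mul, Complex.conj_conj]
  have : ∑ i, ∑ j, (((η k : ℝ) : ℂ) * ((sA l : ℝ) : ℂ))
      * (((starRingEnd ℂ) (v k j) * w l j) * (v k i * (starRingEnd ℂ) (w l i)))
      = (((η k : ℝ) : ℂ) * ((sA l : ℝ) : ℂ)) * (c * (starRingEnd ℂ) c) := by
    rw [hconj, hc, Finset.sum_mul_sum]
    rw [Finset.mul_sum]
    rw [Finset.sum_comm]
    refine Finset.sum_congr rfl fun i _ => ?_
    rw [Finset.mul_sum]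
  rw [this, Complex.mul_conj]
  push_cast
  ring

/-- Rows (and by symmetry columns) of the squared-overlap matrix sum to one. -/
private lemma sum_normSq_eq_one {d : ℕ} (v w : Fin d → Fin d → ℂ) (k : Fin d)
    (hvk : ∑ j, (starRingEnd ℂ) (v k j) * v k j = 1)
    (hwC : ∀ i j, ∑ l, w l i * (starRingEnd ℂ) (w l j) = if i = j then 1 else 0) :
    ∑ l, Complex.normSq (∑ j, (starRingEnd ℂ) (v k j) * w l j) = 1 := by
  have key : ((∑ l, Complex.normSq (∑ j, (starRingEnd ℂ) (v k j) * w l j) : ℝ) : ℂ)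
      = 1 := by
    rw [Complex.ofReal_sum]
    have step1 : ∀ l : Fin d,
        ((Complex.normSq (∑ j, (starRingEnd ℂ) (v k j) * w l j) : ℝ) : ℂ)
          = ∑ j, ∑ i, ((starRingEnd ℂ) (v k j) * w l j)
              * (v k i * (starRingEnd ℂ) (w l i)) := by
      intro l
      rw [← Complex.mul_conj]
      have hconj : (starRingEnd ℂ) (∑ j, (starRingEnd ℂ) (v k j) * w l j)
          = ∑ i, v k i * (starRingEnd ℂ) (w l i) := by
        rw [map_sum]
        exact Finset.sum_congr rfl fun i _ => by
          rw [RingHom.map_mul, Complex.conj_conj]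
      rw [hconj, Finset.sum_mul_sum]
    rw [Finset.sum_congr rfl fun l (_ : l ∈ Finset.univ) => step1 l]
    rw [Finset.sum_comm]
    have step2 : ∀ j : Fin d,
        ∑ l, ∑ i, ((starRingEnd ℂ) (v k j) * w l j) * (v k i * (starRingEnd ℂ) (w l i))
          = ∑ i, ((starRingEnd ℂ) (v k j) * v k i)
              * ∑ l, w l j * (starRingEnd ℂ) (w l i) := by
      intro j
      rw [Finset.sum_comm]
      refine Finset.sum_congr rfl fun i _ => ?_
      rw [Finset.mul_sum]
      exact Finset.sum_congr rfl fun l _ => by ring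
    rw [Finset.sum_congr rfl fun j (_ : j ∈ Finset.univ) => step2 j]
    have step3 : ∀ j : Fin d,
        ∑ i, ((starRingEnd ℂ) (v k j) * v k i) * ∑ l, w l j * (starRingEnd ℂ) (w l i)
          = (starRingEnd ℂ) (v k j) * v k j := by
      intro j
      rw [Finset.sum_congr rfl fun i (_ : i ∈ Finset.univ) => by rw [hwC j i]]
      simp
    rw [Finset.sum_congr rfl fun j (_ : j ∈ Finset.univ) => step3 j]
    exact hvk
  exact_mod_cast key

end AuxConcavity

set_option maxHeartbeats 1600000 in
/-- concavity of the passive energy: for probability weights pₐ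
and density operators ρₐ, E_pass(∑ₐ pₐ ρₐ) ≥ ∑ₐ pₐ E_pass(ρₐ), where E_pass
pairs the decreasingly ordered eigenvalues with the increasingly ordered
energies ε. -/
theorem passiveEnergy_concave {d n : ℕ} (ε : Fin d → ℝ) (hε : Monotone ε)
    (p : Fin n → ℝ) (hp : ∀ a, 0 ≤ p a) (hp1 : ∑ a, p a = 1)
    (ρs : Fin n → Matrix (Fin d) (Fin d) ℂ)
    (hpsd : ∀ a, (ρs a).PosSemidef) (htr : ∀ a, (ρs a).trace = 1) :
    ∑ a, p a * passiveEnergy ε (ρs a) ≤ passiveEnergy ε (∑ a, p a • ρs a) := by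
  classical
  have hAh : ∀ a, (ρs a).IsHermitian := fun a => (hpsd a).1
  have hB : (∑ a, p a • ρs a).IsHermitian := by
    show (∑ a, p a • ρs a)ᴴ = ∑ a, p a • ρs a
    rw [Matrix.conjTranspose_sum]
    exact Finset.sum_congr rfl fun a _ => by
      rw [Matrix.conjTranspose_smul, star_trivial, hAh a]
  set η : Fin d → ℝ := fun k => ε k.rev with hηdef
  have hη : Antitone η := fun a b hab => hε (Fin.rev_le_rev.mpr hab)
  -- passive energy in terms of η
  have hPE : ∀ (M : Matrix (Fin d) (Fin d) ℂ) (hM : M.IsHermitian),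
      passiveEnergy ε M
        = ∑ k, η k * ((hM.eigenvalues ∘ Tuple.sort hM.eigenvalues) k) := by
    intro M hM
    rw [passiveEnergy, dif_pos hM]
    rw [← Equiv.sum_comp Fin.revPerm
      (fun k : Fin d => (hM.eigenvalues ∘ Tuple.sort hM.eigenvalues) k.rev * ε k)]
    refine Finset.sum_congr rfl fun k _ => ?_
    simp only [Fin.revPerm_apply, Fin.rev_rev, hηdef]
    ring
  obtain ⟨v, hvON, hvC, hvdec⟩ := spectral_data hB
  choose w hwON hwC hwdec using fun a => spectral_data (hAh a)
  set sB : Fin d → ℝ := hB.eigenvalues ∘ Tuple.sort hB.eigenvalues with hsBdef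
  set sa : Fin n → Fin d → ℝ :=
    fun a => (hAh a).eigenvalues ∘ Tuple.sort (hAh a).eigenvalues with hsadef
  -- the overlap matrices
  set D : Fin n → Fin d → Fin d → ℝ :=
    fun a k l => Complex.normSq (∑ j, (starRingEnd ℂ) (v k j) * w a l j) with hDdef
  -- trace identities
  have h_B := key_trace η sB v v (∑ a, p a • ρs a) hvdec
  have h_a : ∀ a, ∑ i, ∑ j, (∑ k, ((η k : ℝ) : ℂ) * v k i * (starRingEnd ℂ) (v k j))
        * (ρs a) j i
      = ((∑ k, ∑ l, η k * sa a l * D a k l : ℝ) : ℂ) :=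
    fun a => key_trace η (sa a) v (w a) (ρs a) (hwdec a)
  -- simplify the RHS of h_B using orthonormality
  have hBval : (∑ k, ∑ l, η k * sB l
      * Complex.normSq (∑ j, (starRingEnd ℂ) (v k j) * v l j) : ℝ)
      = ∑ k, η k * sB k := by
    refine Finset.sum_congr rfl fun k _ => ?_
    rw [Finset.sum_congr rfl fun l (_ : l ∈ Finset.univ) => by rw [hvON k l]]
    simp [apply_ite Complex.normSq]
  -- linearity of the trace pairing
  have hBapp : ∀ j i : Fin d,
      (∑ a, p a • ρs a) j i = ∑ a, ((p a : ℝ) : ℂ) * ρs a j i := by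
    intro j i
    simp [Matrix.sum_apply, Matrix.smul_apply, Complex.real_smul]
  have hlin : ∑ i, ∑ j, (∑ k, ((η k : ℝ) : ℂ) * v k i * (starRingEnd ℂ) (v k j))
        * (∑ a, p a • ρs a) j i
      = ∑ a, ((p a : ℝ) : ℂ)
          * ∑ i, ∑ j, (∑ k, ((η k : ℝ) : ℂ) * v k i * (starRingEnd ℂ) (v k j))
              * ρs a j i := by
    rw [Finset.sum_congr rfl fun i (_ : i ∈ Finset.univ) =>
      Finset.sum_congr rfl fun j (_ : j ∈ Finset.univ) => by
        rw [hBapp j i, Finset.mul_sum]]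
    rw [Finset.sum_congr rfl fun i (_ : i ∈ Finset.univ) => Finset.sum_comm]
    rw [Finset.sum_comm]
    refine Finset.sum_congr rfl fun a _ => ?_
    rw [Finset.mul_sum]
    refine Finset.sum_congr rfl fun i _ => ?_
    rw [Finset.mul_sum]
    exact Finset.sum_congr rfl fun j _ => by ring
  -- combine to real identity
  have hmain : ∑ k, η k * sB k = ∑ a, p a * (∑ k, ∑ l, η k * sa a l * D a k l) := by
    have hc : ((∑ k, η k * sB k : ℝ) : ℂ)
        = ((∑ a, p a * (∑ k, ∑ l, η k * sa a l * D a k l) : ℝ) : ℂ) := by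
      rw [← hBval, ← h_B, hlin]
      rw [Complex.ofReal_sum]
      refine Finset.sum_congr rfl fun a _ => ?_
      rw [h_a a, Complex.ofReal_mul]
    exact_mod_cast hc
  -- the pointwise inequality from the rearrangement lemma
  have hineq : ∀ a, passiveEnergy ε (ρs a) ≤ ∑ k, ∑ l, η k * sa a l * D a k l := by
    intro a
    rw [hPE (ρs a) (hAh a)]
    refine ds_rearrange η (sa a) hη (Tuple.monotone_sort _) (D a)
      (fun k l => Complex.normSq_nonneg _) ?_ ?_
    · intro k
      refine sum_normSq_eq_one v (w a) k ?_ (hwC a)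
      have := hvON k k
      simpa using this
    · intro l
      have hrewrite : ∀ k, D a k l
          = Complex.normSq (∑ j, (starRingEnd ℂ) (w a l j) * v k j) := by
        intro k
        show Complex.normSq (∑ j, (starRingEnd ℂ) (v k j) * w a l j) = _
        rw [← Complex.normSq_conj, map_sum]
        congr 1
        exact Finset.sum_congr rfl fun j _ => by
          rw [RingHom.map_mul, Complex.conj_conj]; ring
      rw [Finset.sum_congr rfl fun k (_ : k ∈ Finset.univ) => hrewrite k]
      refine sum_normSq_eq_one (w a) v l ?_ hvC
      have := hwON a l l
      simpa using this
  calc ∑ a, p a * passiveEnergy ε (ρs a)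
      ≤ ∑ a, p a * (∑ k, ∑ l, η k * sa a l * D a k l) :=
        Finset.sum_le_sum fun a _ => mul_le_mul_of_nonneg_left (hineq a) (hp a)
    _ = ∑ k, η k * sB k := hmain.symm
    _ = passiveEnergy ε (∑ a, p a • ρs a) := (hPE _ hB).symm
end

section
/- Daemonic ergotropy exceeds ergotropy (Lemma 1): with ρ_SA a bipartite density operator on ℂ^d ⊗ ℂ^m, {Π_a} orthogonal projectors on the ancilla summing to identity, p_a = Tr[(1⊗Π_a)ρ_SA], ρ_{S|a} the conditional states, and H = Σ_k ε_k |ε_k⟩⟨ε_k| with ε_1 ≤ ... ≤ ε_d, one has W_{{Π_a}} := Tr[ρ_S H] − Σ_a p_a Σ_k r^a_k ε_k ≥ W(ρ_S) := Tr[ρ_S H] − Σ_k r_k ε_k, where r^a_k and r_k are the decreasingly ordered eigenvalues of ρ_{S|a} and ρ_S = Σ_a p_a ρ_{S|a} respectively. -/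
open Matrix Kronecker BigOperators ComplexOrder

/-! ### Auxiliary lemmas -/

section Aux

open Finset in
private lemma sorted_sum_le_perm_sum {d : ℕ} (ε lam : Fin d → ℝ) (hε : Monotone ε)
    (π : Equiv.Perm (Fin d)) :
    ∑ k, (lam ∘ Tuple.sort lam) k.rev * ε k ≤ ∑ k, ε k * lam (π k) := by
  set g : Fin d → ℝ := fun k => (lam ∘ Tuple.sort lam) k.rev with hg
  have hga : Antitone g :=
    (Tuple.monotone_sort lam).comp_antitone (fun a b h => Fin.rev_le_rev.mpr h)
  have hav : Antivary ε g := hε.antivary hga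
  let τ : Equiv.Perm (Fin d) := π.trans (((Tuple.sort lam)⁻¹).trans Fin.revPerm)
  have key := hav.sum_smul_le_sum_smul_comp_perm (σ := τ)
  have h1 : ∀ k, g (τ k) = lam (π k) := by
    intro k
    simp [hg, τ, Fin.rev_rev]
  calc ∑ k, (lam ∘ Tuple.sort lam) k.rev * ε k = ∑ k, ε k • g k := by
        simp [hg, mul_comm]
    _ ≤ ∑ k, ε k • g (τ k) := key
    _ = ∑ k, ε k * lam (π k) := by simp [h1]

private lemma sorted_sum_le_ds_sum {d : ℕ} (ε lam : Fin d → ℝ) (hε : Monotone ε)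
    {D : Matrix (Fin d) (Fin d) ℝ} (hD : D ∈ doublyStochastic ℝ (Fin d)) :
    ∑ k, (lam ∘ Tuple.sort lam) k.rev * ε k ≤ ∑ k, ∑ j, ε k * (D k j * lam j) := by
  obtain ⟨w, hw0, hw1, hw2⟩ := exists_eq_sum_perm_of_mem_doublyStochastic hD
  have hDkj : ∀ k j, D k j = ∑ π : Equiv.Perm (Fin d), w π * (if π k = j then 1 else 0) := by
    intro k j
    rw [← hw2]
    simp [Matrix.sum_apply, Equiv.Perm.permMatrix, PEquiv.toMatrix_apply, Equiv.toPEquiv_apply,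
      eq_comm]
  have hmain : ∑ π : Equiv.Perm (Fin d), w π * ∑ k, ε k * lam (π k)
      = ∑ k, ∑ j, ε k * (D k j * lam j) := by
    simp_rw [hDkj]
    have : ∀ k : Fin d, ∑ j, ε k *
        ((∑ π : Equiv.Perm (Fin d), w π * (if π k = j then 1 else 0)) * lam j)
        = ∑ π : Equiv.Perm (Fin d), w π * (ε k * lam (π k)) := by
      intro k
      simp_rw [Finset.sum_mul, Finset.mul_sum]
      rw [Finset.sum_comm]
      refine Finset.sum_congr rfl fun π _ => ?_
      simp [mul_ite, ite_mul, Finset.sum_ite_eq, mul_comm, mul_left_comm]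
    simp_rw [this]
    rw [Finset.sum_comm]
    simp [Finset.mul_sum]
  calc ∑ k, (lam ∘ Tuple.sort lam) k.rev * ε k
      = ∑ π : Equiv.Perm (Fin d), w π * ∑ k, (lam ∘ Tuple.sort lam) k.rev * ε k := by
        rw [← Finset.sum_mul, hw1, one_mul]
    _ ≤ ∑ π : Equiv.Perm (Fin d), w π * ∑ k, ε k * lam (π k) := by
        refine Finset.sum_le_sum fun π _ => mul_le_mul_of_nonneg_left ?_ (hw0 π)
        exact sorted_sum_le_perm_sum ε lam hε π
    _ = ∑ k, ∑ j, ε k * (D k j * lam j) := hmain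

/-- von Neumann-type lower bound: the passive energy is a lower bound for the energy
in any orthonormal basis. -/
private lemma passiveEnergy_le {d : ℕ} (ε : Fin d → ℝ) (hε : Monotone ε)
    {σ : Matrix (Fin d) (Fin d) ℂ} (hσ : σ.IsHermitian)
    (w : Fin d → Fin d → ℂ) (hw : ∀ j k, star (w j) ⬝ᵥ w k = if j = k then (1:ℂ) else 0) :
    passiveEnergy ε σ ≤ ∑ k, ε k * (star (w k) ⬝ᵥ σ *ᵥ w k).re := by
  rw [passiveEnergy, dif_pos hσ]
  set lam := hσ.eigenvalues with hlam
  set V : Matrix (Fin d) (Fin d) ℂ := (hσ.eigenvectorUnitary : Matrix (Fin d) (Fin d) ℂ) with hV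
  have hV1 : V * Vᴴ = 1 := by
    have := (Unitary.mem_iff.mp hσ.eigenvectorUnitary.2).2
    simpa [hV, Matrix.star_eq_conjTranspose] using this
  have hV2 : Vᴴ * V = 1 := by
    have := (Unitary.mem_iff.mp hσ.eigenvectorUnitary.2).1
    simpa [hV, Matrix.star_eq_conjTranspose] using this
  set u : Fin d → Fin d → ℂ := fun k => Vᴴ *ᵥ w k with hu
  have hsu : ∀ k, star (u k) = star (w k) ᵥ* V := by
    intro k; rw [hu]; rw [star_mulVec, conjTranspose_conjTranspose]
  have hval : ∀ k, star (w k) ⬝ᵥ σ *ᵥ w k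
      = ∑ j, (lam j : ℂ) * (star (u k) j * u k j) := by
    intro k
    conv_lhs => rw [hσ.spectral_theorem, Unitary.conjStarAlgAut_apply]
    rw [← mulVec_mulVec, ← mulVec_mulVec, dotProduct_mulVec, ← hsu]
    simp only [mulVec_diagonal, dotProduct, Pi.star_apply, Matrix.star_eq_conjTranspose, hu,
      Function.comp_apply, RCLike.ofReal_alg]
    refine Finset.sum_congr rfl fun j _ => ?_
    rw [Complex.real_smul, mul_one]
    ring
  have hre : ∀ k, (star (w k) ⬝ᵥ σ *ᵥ w k).re = ∑ j, Complex.normSq (u k j) * lam j := by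
    intro k
    rw [hval]
    rw [Complex.re_sum]
    refine Finset.sum_congr rfl fun j _ => ?_
    have : star (u k) j * u k j = (Complex.normSq (u k j) : ℂ) := by
      simp [Pi.star_apply, Complex.normSq_eq_conj_mul_self]
    rw [this]
    simp [← Complex.ofReal_mul, mul_comm]
  set D : Matrix (Fin d) (Fin d) ℝ := fun k j => Complex.normSq (u k j) with hD
  have hWc : ∀ i l, ∑ k, (starRingEnd ℂ) (w k i) * w k l = if i = l then (1:ℂ) else 0 := by
    intro i l
    set W : Matrix (Fin d) (Fin d) ℂ := fun k i => w k i with hWdef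
    have h1 : W * Wᴴ = 1 := by
      ext j k
      have := hw k j
      simp only [Matrix.mul_apply, conjTranspose_apply]
      simpa [hWdef, Matrix.mul_apply, conjTranspose_apply, dotProduct, Pi.star_apply,
        mul_comm, eq_comm, Matrix.one_apply] using this
    have h2 : Wᴴ * W = 1 := mul_eq_one_comm.mp h1
    have := congrFun (congrFun h2 i) l
    simp only [Matrix.mul_apply, conjTranspose_apply] at this
    simpa [hWdef, Matrix.mul_apply, conjTranspose_apply, Matrix.one_apply] using this
  have hDds : D ∈ doublyStochastic ℝ (Fin d) := by
    rw [mem_doublyStochastic_iff_sum]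
    refine ⟨fun i j => Complex.normSq_nonneg _, ?_, ?_⟩
    · intro k
      have hcast : ((∑ j, Complex.normSq (u k j) : ℝ) : ℂ) = star (u k) ⬝ᵥ u k := by
        push_cast
        simp [dotProduct, Pi.star_apply, Complex.normSq_eq_conj_mul_self]
      have h1 : star (u k) ⬝ᵥ u k = (1:ℂ) := by
        rw [hsu, hu, ← dotProduct_mulVec, mulVec_mulVec, hV1, one_mulVec, hw]
        simp
      have := hcast.trans h1
      exact_mod_cast this
    · intro j
      have hcast : ((∑ k, Complex.normSq (u k j) : ℝ) : ℂ)
          = ∑ k, (starRingEnd ℂ) (u k j) * u k j := by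
        push_cast
        simp [Complex.normSq_eq_conj_mul_self]
      have h1 : (∑ k, (starRingEnd ℂ) (u k j) * u k j) = 1 := by
        have hexp : ∀ k, (starRingEnd ℂ) (u k j) * u k j
            = ∑ i, ∑ l, V i j * (starRingEnd ℂ) (V l j) * ((starRingEnd ℂ) (w k i) * w k l) := by
          intro k
          have hukj : u k j = ∑ i, (starRingEnd ℂ) (V i j) * w k i := by
            simp [hu, mulVec, dotProduct, conjTranspose_apply]
          rw [hukj]
          rw [map_sum, Finset.sum_mul_sum]
          simp [mul_comm, mul_left_comm, mul_assoc]
        simp_rw [hexp]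
        rw [Finset.sum_comm]
        have hin : ∀ i, ∑ k, ∑ l,
            V i j * (starRingEnd ℂ) (V l j) * ((starRingEnd ℂ) (w k i) * w k l)
            = V i j * (starRingEnd ℂ) (V i j) := by
          intro i
          rw [Finset.sum_comm]
          simp_rw [← Finset.mul_sum, hWc]
          simp
        simp_rw [hin]
        have := congrFun (congrFun hV2 j) j
        simpa [Matrix.mul_apply, conjTranspose_apply, Matrix.one_apply, mul_comm] using this
      have := hcast.trans h1
      exact_mod_cast this
  calc ∑ k, (lam ∘ Tuple.sort lam) k.rev * ε k
      ≤ ∑ k, ∑ j, ε k * (D k j * lam j) := sorted_sum_le_ds_sum ε lam hε hDds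
    _ = ∑ k, ε k * (star (w k) ⬝ᵥ σ *ᵥ w k).re := by
        refine Finset.sum_congr rfl fun k _ => ?_
        rw [hre, Finset.mul_sum]

/-- There is an orthonormal family achieving the passive energy. -/
private lemma exists_eigbasis {d : ℕ} (ε : Fin d → ℝ) {σ : Matrix (Fin d) (Fin d) ℂ}
    (hσ : σ.IsHermitian) :
    ∃ w : Fin d → Fin d → ℂ,
      (∀ j k, star (w j) ⬝ᵥ w k = if j = k then (1:ℂ) else 0) ∧
      passiveEnergy ε σ = ∑ k, ε k * (star (w k) ⬝ᵥ σ *ᵥ w k).re := by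
  set s := Tuple.sort hσ.eigenvalues with hs
  refine ⟨fun k => ⇑(hσ.eigenvectorBasis (s k.rev)), ?_, ?_⟩
  · intro j k
    have horth := hσ.eigenvectorBasis.orthonormal
    rw [orthonormal_iff_ite] at horth
    have := horth (s j.rev) (s k.rev)
    rw [EuclideanSpace.inner_eq_star_dotProduct] at this
    have hinj : (s j.rev = s k.rev) = (j = k) := by
      simp [s.injective.eq_iff, Fin.rev_inj]
    simpa [hinj, dotProduct, Pi.star_apply, mul_comm] using this
  · rw [passiveEnergy, dif_pos hσ]
    refine Finset.sum_congr rfl fun k _ => ?_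
    rw [hσ.mulVec_eigenvectorBasis]
    have h1 : star ⇑(hσ.eigenvectorBasis (s k.rev)) ⬝ᵥ ⇑(hσ.eigenvectorBasis (s k.rev))
        = (1:ℂ) := by
      have horth := hσ.eigenvectorBasis.orthonormal
      rw [orthonormal_iff_ite] at horth
      have := horth (s k.rev) (s k.rev)
      rw [EuclideanSpace.inner_eq_star_dotProduct] at this
      simpa [dotProduct, Pi.star_apply, mul_comm] using this
    rw [dotProduct_smul, h1]
    simp [Complex.real_smul, mul_comm, hs]

variable {d m n : ℕ}

private lemma ptrA_isHermitian {X : Matrix (Fin d × Fin m) (Fin d × Fin m) ℂ}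
    (hX : X.IsHermitian) : (ptrA X).IsHermitian := by
  ext i j
  simp only [conjTranspose_apply, ptrA, star_sum]
  refine Finset.sum_congr rfl fun a _ => ?_
  exact congrFun (congrFun hX (i, a)) (j, a)

private lemma ptrA_posSemidef {X : Matrix (Fin d × Fin m) (Fin d × Fin m) ℂ}
    (hX : X.PosSemidef) : (ptrA X).PosSemidef := by
  refine Matrix.PosSemidef.of_dotProduct_mulVec_nonneg (ptrA_isHermitian hX.1) fun x => ?_
  set y : Fin m → (Fin d × Fin m → ℂ) := fun a p => if p.2 = a then x p.1 else 0 with hy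
  have key : ∀ a, star (y a) ⬝ᵥ X *ᵥ y a
      = ∑ i, ∑ j, star (x i) * (X (i,a) (j,a) * x j) := by
    intro a
    simp only [dotProduct, mulVec, hy, Pi.star_apply, Fintype.sum_prod_type]
    simp only [apply_ite (star : ℂ → ℂ), star_zero, mul_ite, mul_zero, ite_mul, zero_mul,
      Finset.sum_ite_eq', Finset.mem_univ, if_true, Finset.mul_sum]
    refine Finset.sum_congr rfl fun i _ => ?_
    simp [Finset.sum_ite_irrel, Finset.sum_ite_eq', Finset.mul_sum]
  have lhs : star x ⬝ᵥ (ptrA X) *ᵥ x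
      = ∑ a, ∑ i, ∑ j, star (x i) * (X (i,a) (j,a) * x j) := by
    simp only [dotProduct, mulVec, ptrA, Pi.star_apply]
    simp_rw [Finset.sum_mul, Finset.mul_sum]
    have hsw : ∀ i : Fin d, (∑ j : Fin d, ∑ a : Fin m, star (x i) * (X (i,a) (j,a) * x j))
        = ∑ a : Fin m, ∑ j : Fin d, star (x i) * (X (i,a) (j,a) * x j) :=
      fun i => Finset.sum_comm
    calc ∑ i : Fin d, ∑ j : Fin d, ∑ a : Fin m, star (x i) * (X (i,a) (j,a) * x j)
        = ∑ i : Fin d, ∑ a : Fin m, ∑ j : Fin d, star (x i) * (X (i,a) (j,a) * x j) := by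
          exact Finset.sum_congr rfl fun i _ => hsw i
      _ = ∑ a, ∑ i, ∑ j, star (x i) * (X (i,a) (j,a) * x j) := Finset.sum_comm
  rw [lhs]
  simp_rw [← key]
  exact Finset.sum_nonneg fun a _ => hX.dotProduct_mulVec_nonneg _

private lemma ptrA_sum {κ : Type*} (s : Finset κ)
    (f : κ → Matrix (Fin d × Fin m) (Fin d × Fin m) ℂ) :
    ptrA (∑ a ∈ s, f a) = ∑ a ∈ s, ptrA (f a) := by
  ext i j
  simp only [ptrA, Matrix.sum_apply]
  exact Finset.sum_comm

private lemma ptrA_cycle (X : Matrix (Fin d × Fin m) (Fin d × Fin m) ℂ)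
    (Q : Matrix (Fin m) (Fin m) ℂ) :
    ptrA (X * ((1 : Matrix (Fin d) (Fin d) ℂ) ⊗ₖ Q))
      = ptrA (((1 : Matrix (Fin d) (Fin d) ℂ) ⊗ₖ Q) * X) := by
  ext i j
  have h1 : ∀ a, (X * ((1 : Matrix (Fin d) (Fin d) ℂ) ⊗ₖ Q)) (i,a) (j,a)
      = ∑ c, X (i,a) (j,c) * Q c a := by
    intro a
    rw [Matrix.mul_apply, Fintype.sum_prod_type, Finset.sum_comm]
    simp [one_apply, mul_ite, mul_zero, ite_mul, zero_mul, Finset.sum_ite_eq,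
      Finset.sum_ite_eq', mul_comm, mul_left_comm]
  have h2 : ∀ a, (((1 : Matrix (Fin d) (Fin d) ℂ) ⊗ₖ Q) * X) (i,a) (j,a)
      = ∑ b, Q a b * X (i,b) (j,a) := by
    intro a
    rw [Matrix.mul_apply, Fintype.sum_prod_type, Finset.sum_comm]
    simp [one_apply, mul_ite, mul_zero, ite_mul, zero_mul, Finset.sum_ite_eq,
      Finset.sum_ite_eq', mul_comm, mul_left_comm]
  simp only [ptrA]
  simp_rw [h1, h2]
  rw [Finset.sum_comm]
  exact Finset.sum_congr rfl fun _ _ => Finset.sum_congr rfl fun _ _ => mul_comm _ _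

private lemma trace_ptrA (X : Matrix (Fin d × Fin m) (Fin d × Fin m) ℂ) :
    (ptrA X).trace = X.trace := by
  simp [Matrix.trace, ptrA, Matrix.diag, Fintype.sum_prod_type]

private lemma kron_one_isHermitian {Q : Matrix (Fin m) (Fin m) ℂ} (hQ : Q.IsHermitian) :
    ((1 : Matrix (Fin d) (Fin d) ℂ) ⊗ₖ Q).IsHermitian := by
  ext ⟨i, a⟩ ⟨j, b⟩
  have hQ' : star (Q b a) = Q a b := congrFun (congrFun hQ a) b
  simp only [conjTranspose_apply, kroneckerMap_apply, one_apply, star_mul', apply_ite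
    (star : ℂ → ℂ), star_one, star_zero]
  rw [show (star (Q b a) : ℂ) = Q a b from hQ']
  by_cases h : i = j
  · subst h; simp
  · simp [h, Ne.symm h]

private lemma kron_one_sum (f : Fin n → Matrix (Fin m) (Fin m) ℂ) :
    ∑ a, (1 : Matrix (Fin d) (Fin d) ℂ) ⊗ₖ f a
      = (1 : Matrix (Fin d) (Fin d) ℂ) ⊗ₖ (∑ a, f a) := by
  ext ⟨i, x⟩ ⟨j, y⟩
  simp [Matrix.sum_apply, Finset.mul_sum]

private lemma trace_eq_sum_eigenvalues {A : Matrix (Fin d) (Fin d) ℂ} (hA : A.IsHermitian) :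
    A.trace = ((∑ i, hA.eigenvalues i : ℝ) : ℂ) := by
  conv_lhs => rw [hA.spectral_theorem, Unitary.conjStarAlgAut_apply]
  rw [Matrix.trace_mul_cycle]
  have h2 : (hA.eigenvectorUnitary : Matrix (Fin d) (Fin d) ℂ)ᴴ *
      (hA.eigenvectorUnitary : Matrix (Fin d) (Fin d) ℂ) = 1 := by
    have := (Unitary.mem_iff.mp hA.eigenvectorUnitary.2).1
    simpa [Matrix.star_eq_conjTranspose] using this
  rw [show (star (hA.eigenvectorUnitary : Matrix (Fin d) (Fin d) ℂ))
      = (hA.eigenvectorUnitary : Matrix (Fin d) (Fin d) ℂ)ᴴ from rfl, h2, one_mul,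
    trace_diagonal]
  push_cast
  rfl

private lemma psd_trace_real {A : Matrix (Fin d) (Fin d) ℂ} (hA : A.PosSemidef) :
    A.trace = ((A.trace.re : ℝ) : ℂ) ∧ 0 ≤ A.trace.re := by
  have h := trace_eq_sum_eigenvalues hA.1
  constructor
  · rw [h]; simp
  · rw [h]
    simp only [Complex.ofReal_re]
    exact Finset.sum_nonneg fun i _ => hA.eigenvalues_nonneg i

private lemma passiveEnergy_eq_zero (ε : Fin d → ℝ) {A : Matrix (Fin d) (Fin d) ℂ}
    (hA : A.PosSemidef) (h : A.trace.re = 0) : passiveEnergy ε A = 0 := by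
  have hsum : ∑ i, hA.1.eigenvalues i = 0 := by
    have := trace_eq_sum_eigenvalues hA.1
    rw [this] at h
    simpa using h
  have hz : ∀ i, hA.1.eigenvalues i = 0 := by
    intro i
    have := (Finset.sum_eq_zero_iff_of_nonneg
      (fun i _ => hA.eigenvalues_nonneg i)).mp hsum
    exact this i (Finset.mem_univ i)
  rw [passiveEnergy, dif_pos hA.1]
  simp [hz]

end Aux

/-- Lemma 1: the daemonic ergotropy exceeds the ergotropy:
W_{Πₐ} = Tr[ρ_S H] − ∑ₐ pₐ ∑ₖ rᵃₖ εₖ ≥ W = Tr[ρ_S H] − ∑ₖ rₖ εₖ, for any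
complete projective measurement on the ancilla. -/
theorem daemonic_ergotropy_ge_ergotropy {d m n : ℕ}
    (ε : Fin d → ℝ) (hε : Monotone ε)
    (e : Fin d → Fin d → ℂ)
    (he : ∀ j k, star (e j) ⬝ᵥ e k = if j = k then (1 : ℂ) else 0)
    (H : Matrix (Fin d) (Fin d) ℂ)
    (hH : H = ∑ k, (ε k : ℂ) • vecMulVec (e k) (star (e k)))
    (ρ : Matrix (Fin d × Fin m) (Fin d × Fin m) ℂ)
    (hρ : ρ.PosSemidef) (htr : ρ.trace = 1)
    (P : Fin n → Matrix (Fin m) (Fin m) ℂ)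
    (hPh : ∀ a, (P a).IsHermitian)
    (hPo : ∀ a b, P a * P b = if a = b then P a else 0)
    (hPc : ∑ a, P a = 1) :
    ((ptrA ρ) * H).trace.re - passiveEnergy ε (ptrA ρ) ≤
      ((ptrA ρ) * H).trace.re -
        ∑ a, outcomeProb ρ (P a) * passiveEnergy ε (condState ρ (P a)) := by
  have hmain : ∑ a, outcomeProb ρ (P a) * passiveEnergy ε (condState ρ (P a))
      ≤ passiveEnergy ε (ptrA ρ) := by
    set S : Fin n → Matrix (Fin d) (Fin d) ℂ :=
      fun a => ptrA (((1 : Matrix (Fin d) (Fin d) ℂ) ⊗ₖ P a) * ρ *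
        ((1 : Matrix (Fin d) (Fin d) ℂ) ⊗ₖ P a)) with hS
    have hkerm : ∀ a, ((1 : Matrix (Fin d) (Fin d) ℂ) ⊗ₖ P a).IsHermitian :=
      fun a => kron_one_isHermitian (hPh a)
    have hSpsd : ∀ a, (S a).PosSemidef := by
      intro a
      refine ptrA_posSemidef ?_
      have := hρ.mul_mul_conjTranspose_same (B := (1 : Matrix (Fin d) (Fin d) ℂ) ⊗ₖ P a)
      rwa [(hkerm a).eq] at this
    have hSalt : ∀ a, S a = ptrA (((1 : Matrix (Fin d) (Fin d) ℂ) ⊗ₖ P a) * ρ) := by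
      intro a
      rw [hS]
      simp only
      rw [ptrA_cycle, ← Matrix.mul_assoc, ← mul_kronecker_mul, one_mul]
      rw [show P a * P a = P a by simpa using hPo a a]
    have hsum : ∑ a, S a = ptrA ρ := by
      simp_rw [hSalt]
      rw [← ptrA_sum, ← Finset.sum_mul, kron_one_sum, hPc]
      congr 1
      rw [one_kronecker_one, one_mul]
    have htrS : ∀ a, (S a).trace = ((outcomeProb ρ (P a) : ℝ) : ℂ) := by
      intro a
      have h1 : (S a).trace = (((1 : Matrix (Fin d) (Fin d) ℂ) ⊗ₖ P a) * ρ).trace := by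
        rw [hSalt, trace_ptrA]
      have h2 := (psd_trace_real (hSpsd a)).1
      rw [outcomeProb, ← h1, h2]
      rw [h2]
      simp
    have hp0 : ∀ a, 0 ≤ outcomeProb ρ (P a) := by
      intro a
      have h1 : (S a).trace = (((1 : Matrix (Fin d) (Fin d) ℂ) ⊗ₖ P a) * ρ).trace := by
        rw [hSalt, trace_ptrA]
      have := (psd_trace_real (hSpsd a)).2
      rwa [h1] at this
    have htrre : ∀ a, (S a).trace.re = outcomeProb ρ (P a) := by
      intro a
      have := htrS a
      have := congrArg Complex.re this
      simpa using this
    obtain ⟨w, hw, hpe⟩ := exists_eigbasis ε (ptrA_posSemidef hρ).1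
    rw [hpe]
    have hdec : ∀ k, (star (w k) ⬝ᵥ (ptrA ρ) *ᵥ w k) = ∑ a, star (w k) ⬝ᵥ (S a) *ᵥ w k := by
      intro k
      rw [← hsum]
      have h1 : (∑ a, S a) *ᵥ w k = ∑ a, (S a) *ᵥ w k := by
        ext i
        simp [Matrix.mulVec, Matrix.sum_apply, dotProduct, Finset.sum_mul]
        exact Finset.sum_comm
      rw [h1]
      simp [dotProduct, Finset.mul_sum]
      exact Finset.sum_comm
    have per_a : ∀ a, outcomeProb ρ (P a) * passiveEnergy ε (condState ρ (P a))
        ≤ ∑ k, ε k * (star (w k) ⬝ᵥ (S a) *ᵥ w k).re := by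
      intro a
      by_cases hpa : outcomeProb ρ (P a) = 0
      · rw [hpa, zero_mul]
        have h1 := passiveEnergy_le ε hε (hSpsd a).1 w hw
        have h2 : passiveEnergy ε (S a) = 0 :=
          passiveEnergy_eq_zero ε (hSpsd a) (by rw [htrre a, hpa])
        linarith
      · have hcond : S a = outcomeProb ρ (P a) • condState ρ (P a) := by
          rw [condState, smul_smul, mul_inv_cancel₀ hpa, one_smul, hS]
        have hch : (condState ρ (P a)).IsHermitian := by
          rw [condState]
          have hh := (hSpsd a).1
          rw [IsHermitian] at hh ⊢
          rw [conjTranspose_smul]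
          rw [hS] at hh
          simp only at hh
          rw [hh, star_trivial]
        have h1 := passiveEnergy_le ε hε hch w hw
        have hre : ∀ k, (star (w k) ⬝ᵥ (S a) *ᵥ w k).re
            = outcomeProb ρ (P a) * (star (w k) ⬝ᵥ (condState ρ (P a)) *ᵥ w k).re := by
          intro k
          rw [hcond, smul_mulVec, dotProduct_smul]
          simp [Complex.real_smul]
        calc outcomeProb ρ (P a) * passiveEnergy ε (condState ρ (P a))
            ≤ outcomeProb ρ (P a) *
              ∑ k, ε k * (star (w k) ⬝ᵥ (condState ρ (P a)) *ᵥ w k).re :=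
              mul_le_mul_of_nonneg_left h1 (hp0 a)
          _ = ∑ k, ε k * (star (w k) ⬝ᵥ (S a) *ᵥ w k).re := by
              rw [Finset.mul_sum]
              refine Finset.sum_congr rfl fun k _ => ?_
              rw [hre k]
              ring
    calc ∑ a, outcomeProb ρ (P a) * passiveEnergy ε (condState ρ (P a))
        ≤ ∑ a, ∑ k, ε k * (star (w k) ⬝ᵥ (S a) *ᵥ w k).re :=
          Finset.sum_le_sum fun a _ => per_a a
      _ = ∑ k, ε k * (star (w k) ⬝ᵥ (ptrA ρ) *ᵥ w k).re := by
          rw [Finset.sum_comm]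
          refine Finset.sum_congr rfl fun k _ => ?_
          rw [hdec k, Complex.re_sum, Finset.mul_sum]
  linarith
end

section
/- Per-outcome relative ergotropy: for each measurement outcome a with p_a > 0, the quantity Σ_{k,j} r^a_j ε_k (|⟨r_k|r^a_j⟩|² − δ_{kj}) is nonnegative, being the ergotropy of ρ_{S|a} relative to the Hamiltonian Σ_k ε_k |r_k⟩⟨r_k|, and it is zero if and only if ρ_{S|a} = Σ_k r^a_k |r_k⟩⟨r_k| (assuming ε_1 < ε_2 < ... < ε_d). -/
open Matrix Kronecker BigOperators ComplexOrder

section AuxErg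

lemma mul_star_self_eq_normSq (z : ℂ) : z * star z = (Complex.normSq z : ℂ) :=
  Complex.mul_conj z

lemma star_self_mul_eq_normSq (z : ℂ) : star z * z = (Complex.normSq z : ℂ) := by
  rw [mul_comm]; exact Complex.mul_conj z

lemma abel_id (e y : ℕ → ℝ) (d : ℕ) :
    ∑ k ∈ Finset.range d, e k * y k
      = e 0 * ∑ k ∈ Finset.range d, y k
        + ∑ m ∈ Finset.range d, (e (m + 1) - e m) * ∑ k ∈ Finset.Ico (m + 1) d, y k := by
  induction d with
  | zero => simp
  | succ d ih =>
    rw [Finset.sum_range_succ, ih,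
      Finset.sum_range_succ (f := fun m => (e (m + 1) - e m) * ∑ k ∈ Finset.Ico (m + 1) (d + 1), y k),
      Finset.sum_range_succ (f := y), Finset.Ico_self, Finset.sum_empty, mul_zero, add_zero]
    have h1 : ∑ m ∈ Finset.range d, (e (m + 1) - e m) * ∑ k ∈ Finset.Ico (m + 1) (d + 1), y k
        = ∑ m ∈ Finset.range d, ((e (m + 1) - e m) * ∑ k ∈ Finset.Ico (m + 1) d, y k
            + (e (m + 1) - e m) * y d) := by
      refine Finset.sum_congr rfl fun m hm => ?_
      rw [Finset.sum_Ico_succ_top (Finset.mem_range.mp hm), mul_add]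
    rw [h1, Finset.sum_add_distrib, ← Finset.sum_mul, Finset.sum_range_sub (f := e)]
    ring

lemma abel_key (d : ℕ) (e y : ℕ → ℝ)
    (he : ∀ m, m + 1 < d → e m < e (m + 1))
    (hpre : ∀ m, m < d → ∑ k ∈ Finset.range (m + 1), y k ≤ 0)
    (htot : ∑ k ∈ Finset.range d, y k = 0) :
    0 ≤ ∑ k ∈ Finset.range d, e k * y k ∧
      (∑ k ∈ Finset.range d, e k * y k = 0 →
        ∀ m, m < d → ∑ k ∈ Finset.range (m + 1), y k = 0) := by
  have hterm : ∀ m ∈ Finset.range d, 0 ≤ (e (m + 1) - e m) * ∑ k ∈ Finset.Ico (m + 1) d, y k := by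
    intro m hm
    have hm' : m < d := Finset.mem_range.mp hm
    have hIco : ∑ k ∈ Finset.Ico (m + 1) d, y k = - ∑ k ∈ Finset.range (m + 1), y k := by
      rw [Finset.sum_Ico_eq_sub _ hm', htot]; ring
    rcases eq_or_lt_of_le (Nat.succ_le_of_lt hm') with h | h
    · rw [show m + 1 = d from h, Finset.Ico_self, Finset.sum_empty, mul_zero]
    · refine mul_nonneg (le_of_lt (sub_pos.mpr (he m h))) ?_
      rw [hIco]; linarith [hpre m hm']
  constructor
  · rw [abel_id, htot, mul_zero, zero_add]
    exact Finset.sum_nonneg hterm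
  · intro h0 m hm
    rw [abel_id, htot, mul_zero, zero_add] at h0
    have hz := (Finset.sum_eq_zero_iff_of_nonneg hterm).mp h0
    rcases eq_or_lt_of_le (Nat.succ_le_of_lt hm) with h | h
    · rw [show m + 1 = d from h]; exact htot
    · have hz' := hz m (Finset.mem_range.mpr hm)
      have hne : e (m + 1) - e m ≠ 0 := ne_of_gt (sub_pos.mpr (he m h))
      have hIco0 : ∑ k ∈ Finset.Ico (m + 1) d, y k = 0 := by
        rcases mul_eq_zero.mp hz' with h' | h'
        · exact absurd h' hne
        · exact h'
      have h2 := Finset.sum_Ico_eq_sub y (Nat.succ_le_of_lt hm)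
      rw [hIco0, htot] at h2
      linarith

lemma slack_eq {d : ℕ} (B : Fin d → Fin d → ℝ) (r : Fin d → ℝ)
    (hrow : ∀ k, ∑ j, B k j = 1)
    (A : Finset (Fin d)) (t : ℝ) :
    ∑ j ∈ A, r j - ∑ k ∈ A, (∑ j, B k j * r j)
      = ∑ j ∈ A, (1 - ∑ k ∈ A, B k j) * (r j - t)
        + ∑ j ∈ Aᶜ, (∑ k ∈ A, B k j) * (t - r j) := by
  have hswap : ∑ k ∈ A, (∑ j, B k j * r j) = ∑ j, (∑ k ∈ A, B k j) * r j := by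
    rw [Finset.sum_comm]
    exact Finset.sum_congr rfl fun j _ => (Finset.sum_mul _ _ _).symm
  have hcardsum : ∑ j, (∑ k ∈ A, B k j) = (A.card : ℝ) := by
    rw [Finset.sum_comm, Finset.sum_congr rfl fun k (_ : k ∈ A) => hrow k]
    simp
  have hcr : ∑ j ∈ A, (∑ k ∈ A, B k j) * r j + ∑ j ∈ Aᶜ, (∑ k ∈ A, B k j) * r j
      = ∑ j, (∑ k ∈ A, B k j) * r j := Finset.sum_add_sum_compl A _
  have hct : ∑ j ∈ A, (∑ k ∈ A, B k j) * t + ∑ j ∈ Aᶜ, (∑ k ∈ A, B k j) * t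
      = (A.card : ℝ) * t := by
    rw [Finset.sum_add_sum_compl, ← Finset.sum_mul, hcardsum]
  have e1 : ∑ j ∈ A, (1 - ∑ k ∈ A, B k j) * (r j - t)
      = (∑ j ∈ A, r j - (A.card : ℝ) * t)
        - ∑ j ∈ A, (∑ k ∈ A, B k j) * r j + ∑ j ∈ A, (∑ k ∈ A, B k j) * t := by
    rw [Finset.sum_congr rfl fun j (_ : j ∈ A) =>
      (show (1 - ∑ k ∈ A, B k j) * (r j - t)
        = (r j - t) - (∑ k ∈ A, B k j) * r j + (∑ k ∈ A, B k j) * t from by ring)]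
    rw [Finset.sum_add_distrib, Finset.sum_sub_distrib, Finset.sum_sub_distrib,
      Finset.sum_const, nsmul_eq_mul]
  have e2 : ∑ j ∈ Aᶜ, (∑ k ∈ A, B k j) * (t - r j)
      = ∑ j ∈ Aᶜ, (∑ k ∈ A, B k j) * t - ∑ j ∈ Aᶜ, (∑ k ∈ A, B k j) * r j := by
    rw [← Finset.sum_sub_distrib]
    exact Finset.sum_congr rfl fun j _ => by ring
  rw [hswap, e1, e2]
  linarith [hcr, hct]

lemma slack_bound {d : ℕ} (B : Fin d → Fin d → ℝ) (r : Fin d → ℝ)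
    (hB0 : ∀ k j, 0 ≤ B k j)
    (hrow : ∀ k, ∑ j, B k j = 1) (hcol : ∀ j, ∑ k, B k j = 1)
    (A : Finset (Fin d)) (t : ℝ)
    (hA1 : ∀ j ∈ A, t ≤ r j) (hA2 : ∀ j, j ∉ A → r j ≤ t) :
    0 ≤ ∑ j ∈ A, r j - ∑ k ∈ A, (∑ j, B k j * r j) ∧
      ((∑ j ∈ A, r j - ∑ k ∈ A, (∑ j, B k j * r j)) = 0 →
        (∀ j ∈ A, t < r j → ∀ k, k ∉ A → B k j = 0) ∧
        (∀ j, j ∉ A → r j < t → ∀ k ∈ A, B k j = 0)) := by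
  have hc0 : ∀ j, 0 ≤ ∑ k ∈ A, B k j := fun j => Finset.sum_nonneg fun k _ => hB0 k j
  have hc1 : ∀ j, ∑ k ∈ A, B k j ≤ 1 := by
    intro j
    rw [← hcol j]
    exact Finset.sum_le_sum_of_subset_of_nonneg (Finset.subset_univ A) fun k _ _ => hB0 k j
  have h1 : ∀ j ∈ A, 0 ≤ (1 - ∑ k ∈ A, B k j) * (r j - t) :=
    fun j hj => mul_nonneg (by linarith [hc1 j]) (by linarith [hA1 j hj])
  have h2 : ∀ j ∈ Aᶜ, 0 ≤ (∑ k ∈ A, B k j) * (t - r j) :=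
    fun j hj => mul_nonneg (hc0 j) (by linarith [hA2 j (Finset.mem_compl.mp hj)])
  rw [slack_eq B r hrow A t]
  refine ⟨add_nonneg (Finset.sum_nonneg h1) (Finset.sum_nonneg h2), ?_⟩
  intro h0
  have hn1 := Finset.sum_nonneg h1
  have hn2 := Finset.sum_nonneg h2
  have hs1 : ∑ j ∈ A, (1 - ∑ k ∈ A, B k j) * (r j - t) = 0 := by linarith
  have hs2 : ∑ j ∈ Aᶜ, (∑ k ∈ A, B k j) * (t - r j) = 0 := by linarith
  have hz1 := (Finset.sum_eq_zero_iff_of_nonneg h1).mp hs1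
  have hz2 := (Finset.sum_eq_zero_iff_of_nonneg h2).mp hs2
  constructor
  · intro j hj hjt k hk
    have hcj : ∑ k' ∈ A, B k' j = 1 := by
      rcases mul_eq_zero.mp (hz1 j hj) with h | h
      · linarith
      · exact absurd h (ne_of_gt (sub_pos.mpr hjt))
    have hcompl : ∑ k' ∈ Aᶜ, B k' j = 0 := by
      have hsum := Finset.sum_add_sum_compl A (fun k' => B k' j)
      rw [hcol j] at hsum
      linarith
    exact (Finset.sum_eq_zero_iff_of_nonneg fun k' _ => hB0 k' j).mp hcompl k
      (Finset.mem_compl.mpr hk)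
  · intro j hj hjt k hk
    have hcj : ∑ k' ∈ A, B k' j = 0 := by
      rcases mul_eq_zero.mp (hz2 j (Finset.mem_compl.mpr hj)) with h | h
      · exact h
      · exact absurd h (ne_of_gt (sub_pos.mpr hjt))
    exact (Finset.sum_eq_zero_iff_of_nonneg fun k' _ => hB0 k' j).mp hcj k hk

lemma sum_smul_vecMulVec {d : ℕ} (ra : Fin d → ℝ) (u : Fin d → Fin d → ℂ) :
    (∑ k, (ra k : ℂ) • Matrix.vecMulVec (u k) (star (u k)))
      = (Matrix.of fun i k => u k i) * Matrix.diagonal (fun k => (ra k : ℂ)) *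
          (Matrix.of fun i k => u k i)ᴴ := by
  ext i i'
  rw [Matrix.sum_apply, Matrix.mul_apply]
  refine Finset.sum_congr rfl fun k _ => ?_
  rw [Matrix.mul_diagonal, Matrix.conjTranspose_apply]
  simp only [Matrix.smul_apply, Matrix.vecMulVec_apply, Pi.star_apply, smul_eq_mul,
    Matrix.of_apply]
  ring

end AuxErg

/-- per-outcome relative ergotropy
∑_{k,j} rᵃⱼ εₖ (|⟨rₖ|rᵃⱼ⟩|² − δₖⱼ) is nonnegative, and (for strictly
increasing ε) it vanishes iff the conditional state is diagonal with
decreasing populations in the basis {|rₖ⟩}: σ = ∑ₖ rᵃₖ |rₖ⟩⟨rₖ|. -/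
theorem per_outcome_relative_ergotropy {d : ℕ}
    (ε : Fin d → ℝ) (hε : StrictMono ε)
    (v : Fin d → Fin d → ℂ)
    (hv : ∀ j k, star (v j) ⬝ᵥ v k = if j = k then (1 : ℂ) else 0)
    (ra : Fin d → ℝ) (hra : Antitone ra)
    (hra0 : ∀ k, 0 ≤ ra k) (hra1 : ∑ k, ra k = 1)
    (w : Fin d → Fin d → ℂ)
    (hw : ∀ j k, star (w j) ⬝ᵥ w k = if j = k then (1 : ℂ) else 0)
    (σ : Matrix (Fin d) (Fin d) ℂ)
    (hσ : σ = ∑ k, (ra k : ℂ) • vecMulVec (w k) (star (w k))) :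
    0 ≤ (∑ k, ∑ j, ra j * ε k *
        (‖star (v k) ⬝ᵥ w j‖ ^ 2 - if k = j then 1 else 0)) ∧
    ((∑ k, ∑ j, ra j * ε k *
        (‖star (v k) ⬝ᵥ w j‖ ^ 2 - if k = j then 1 else 0)) = 0 ↔
      σ = ∑ k, (ra k : ℂ) • vecMulVec (v k) (star (v k))) := by
  classical
  set V : Matrix (Fin d) (Fin d) ℂ := Matrix.of fun i k => v k i with hVdef
  set W : Matrix (Fin d) (Fin d) ℂ := Matrix.of fun i k => w k i with hWdef
  have hV1 : Vᴴ * V = 1 := by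
    ext j k
    simpa [hVdef, Matrix.mul_apply, Matrix.conjTranspose_apply, dotProduct,
      Matrix.one_apply] using hv j k
  have hW1 : Wᴴ * W = 1 := by
    ext j k
    simpa [hWdef, Matrix.mul_apply, Matrix.conjTranspose_apply, dotProduct,
      Matrix.one_apply] using hw j k
  have hV2 : V * Vᴴ = 1 := mul_eq_one_comm.mp hV1
  have hW2 : W * Wᴴ = 1 := mul_eq_one_comm.mp hW1
  set M : Matrix (Fin d) (Fin d) ℂ := Vᴴ * W with hMdef
  have hMapp : ∀ k j, M k j = star (v k) ⬝ᵥ w j := by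
    intro k j
    simp [hMdef, hVdef, hWdef, Matrix.mul_apply, Matrix.conjTranspose_apply, dotProduct]
  have hM1 : M * Mᴴ = 1 := by
    have h : M * Mᴴ = Vᴴ * (W * Wᴴ) * V := by
      rw [hMdef, Matrix.conjTranspose_mul, Matrix.conjTranspose_conjTranspose]
      simp only [Matrix.mul_assoc]
    rw [h, hW2, Matrix.mul_one, hV1]
  have hM2 : Mᴴ * M = 1 := mul_eq_one_comm.mp hM1
  have hWVM : W = V * M := by
    rw [hMdef, ← Matrix.mul_assoc, hV2, Matrix.one_mul]
  set D : Matrix (Fin d) (Fin d) ℂ := Matrix.diagonal fun k => (ra k : ℂ) with hDdef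
  have hσW : σ = W * D * Wᴴ := by
    rw [hσ, hWdef, hDdef]; exact sum_smul_vecMulVec ra w
  have htgt : (∑ k, (ra k : ℂ) • vecMulVec (v k) (star (v k))) = V * D * Vᴴ := by
    rw [hVdef, hDdef]; exact sum_smul_vecMulVec ra v
  set B : Fin d → Fin d → ℝ := fun k j => Complex.normSq (M k j) with hBdef
  have hB0 : ∀ k j, 0 ≤ B k j := fun k j => Complex.normSq_nonneg _
  have hrow : ∀ k, ∑ j, B k j = 1 := by
    intro k
    have h : (M * Mᴴ) k k = 1 := by rw [hM1]; simp
    rw [Matrix.mul_apply] at h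
    have h2 : ∑ j, ((B k j : ℝ) : ℂ) = 1 := by
      rw [← h]
      refine Finset.sum_congr rfl fun j _ => ?_
      rw [Matrix.conjTranspose_apply]
      simp only [hBdef]
      exact (mul_star_self_eq_normSq _).symm
    exact_mod_cast h2
  have hcol : ∀ j, ∑ k, B k j = 1 := by
    intro j
    have h : (Mᴴ * M) j j = 1 := by rw [hM2]; simp
    rw [Matrix.mul_apply] at h
    have h2 : ∑ k, ((B k j : ℝ) : ℂ) = 1 := by
      rw [← h]
      refine Finset.sum_congr rfl fun k _ => ?_
      rw [Matrix.conjTranspose_apply]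
      simp only [hBdef]
      exact (star_self_mul_eq_normSq _).symm
    exact_mod_cast h2
  set x : Fin d → ℝ := fun k => ∑ j, B k j * ra j with hxdef
  have habs : ∀ k j, ‖star (v k) ⬝ᵥ w j‖ ^ 2 = B k j := by
    intro k j
    rw [← hMapp k j]
    simp only [hBdef]
    exact Complex.sq_norm _
  have hS : (∑ k, ∑ j, ra j * ε k *
        (‖star (v k) ⬝ᵥ w j‖ ^ 2 - if k = j then 1 else 0))
      = ∑ k, ε k * (x k - ra k) := by
    refine Finset.sum_congr rfl fun k _ => ?_
    have h1 : ∀ j, ra j * ε k *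
          (‖star (v k) ⬝ᵥ w j‖ ^ 2 - if k = j then 1 else 0)
        = ε k * (B k j * ra j) - (if k = j then ε k * ra j else 0) := by
      intro j
      rw [habs]
      by_cases hkj : k = j
      · simp only [hkj, eq_self_iff_true, if_true]; ring
      · simp only [if_neg hkj]; ring
    rw [Finset.sum_congr rfl fun j _ => h1 j, Finset.sum_sub_distrib, ← Finset.mul_sum,
      Finset.sum_ite_eq]
    simp only [hxdef, Finset.mem_univ, if_true]
    ring
  set y : Fin d → ℝ := fun k => x k - ra k with hydef
  set e : ℕ → ℝ := fun n => if h : n < d then ε ⟨n, h⟩ else 0 with hedef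
  set y' : ℕ → ℝ := fun n => if h : n < d then y ⟨n, h⟩ else 0 with hy'def
  have hy'k : ∀ k : Fin d, y' (k : ℕ) = y k := by
    intro k; simp [hy'def, k.isLt]
  have hek : ∀ k : Fin d, e (k : ℕ) = ε k := by
    intro k; simp [hedef, k.isLt]
  have hfinsum : ∑ k, ε k * (x k - ra k) = ∑ n ∈ Finset.range d, e n * y' n := by
    rw [← Fin.sum_univ_eq_sum_range (fun n => e n * y' n) d]
    exact Finset.sum_congr rfl fun k _ => by rw [hek k, hy'k k]
  have htotF : ∑ k, y k = 0 := by
    simp only [hydef]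
    rw [Finset.sum_sub_distrib]
    have hxt : ∑ k, x k = ∑ j, ra j := by
      simp only [hxdef]
      rw [Finset.sum_comm]
      refine Finset.sum_congr rfl fun j _ => ?_
      rw [← Finset.sum_mul, hcol j, one_mul]
    rw [hxt, sub_self]
  have htot' : ∑ n ∈ Finset.range d, y' n = 0 := by
    have h : ∑ n ∈ Finset.range d, y' n = ∑ k : Fin d, y k := by
      rw [← Fin.sum_univ_eq_sum_range y' d]
      exact Finset.sum_congr rfl fun k _ => hy'k k
    rw [h, htotF]
  have hconv : ∀ m : ℕ, m < d →
      ∑ n ∈ Finset.range (m + 1), y' n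
        = ∑ k ∈ Finset.univ.filter (fun i : Fin d => (i : ℕ) ≤ m), y k := by
    intro m hm
    have h1 : Finset.range (m + 1) = (Finset.range d).filter (fun n => n ≤ m) := by
      ext n; simp only [Finset.mem_range, Finset.mem_filter]; omega
    rw [h1, Finset.sum_filter,
      ← Fin.sum_univ_eq_sum_range (fun n => if n ≤ m then y' n else 0) d,
      Finset.sum_filter]
    exact Finset.sum_congr rfl fun k _ => by rw [hy'k]
  have hyA : ∀ A : Finset (Fin d),
      ∑ k ∈ A, y k = ∑ k ∈ A, (∑ j, B k j * ra j) - ∑ j ∈ A, ra j := by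
    intro A
    simp only [hydef, hxdef]
    rw [Finset.sum_sub_distrib]
  have hpre' : ∀ m, m < d → ∑ n ∈ Finset.range (m + 1), y' n ≤ 0 := by
    intro m hm
    rw [hconv m hm]
    have hsb := (slack_bound B ra hB0 hrow hcol
      (Finset.univ.filter (fun i : Fin d => (i : ℕ) ≤ m)) (ra ⟨m, hm⟩)
      (fun j hj => hra (Fin.le_def.mpr (by simpa using hj)))
      (fun j hj => hra (Fin.le_def.mpr (le_of_lt (by simpa using hj))))).1
    rw [hyA]
    linarith [hsb]
  have he' : ∀ m, m + 1 < d → e m < e (m + 1) := by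
    intro m hm
    have h1 : m < d := Nat.lt_of_succ_lt hm
    simp only [hedef]
    rw [dif_pos h1, dif_pos hm]
    exact hε (Fin.mk_lt_mk.mpr (Nat.lt_succ_self m))
  obtain ⟨hnn, heqz⟩ := abel_key d e y' he' hpre' htot'
  constructor
  · rw [hS, hfinsum]; exact hnn
  constructor
  · intro h0
    have h0' : ∑ n ∈ Finset.range d, e n * y' n = 0 := by
      rw [← hfinsum, ← hS]; exact h0
    have hpre0 := heqz h0'
    have hblock : ∀ k j, M k j ≠ 0 → ra k = ra j := by
      intro k j hMne
      by_contra hne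
      have hBpos : 0 < B k j := by
        simp only [hBdef]
        exact Complex.normSq_pos.mpr hMne
      set t := (ra k + ra j) / 2 with htdef
      set A := Finset.univ.filter (fun i : Fin d => t ≤ ra i) with hAdef
      have hc0 : ∀ i : Fin d, i ∈ A ↔ t ≤ ra i := by
        intro i; simp [hAdef]
      have hA1 : ∀ i ∈ A, t ≤ ra i := fun i hi => (hc0 i).mp hi
      have hA2 : ∀ i, i ∉ A → ra i ≤ t :=
        fun i hi => le_of_lt (lt_of_not_ge (fun h => hi ((hc0 i).mpr h)))
      have hApre : A.Nonempty →
          ∑ j' ∈ A, ra j' - ∑ k' ∈ A, (∑ j', B k' j' * ra j') = 0 := by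
        intro hAne
        set m0 := A.max' hAne with hm0def
        have hm0A : m0 ∈ A := A.max'_mem hAne
        have htm0 : t ≤ ra m0 := (hc0 m0).mp hm0A
        have hAeq : A = Finset.univ.filter (fun i : Fin d => (i : ℕ) ≤ (m0 : ℕ)) := by
          ext i
          rw [hc0 i, Finset.mem_filter]
          simp only [Finset.mem_univ, true_and]
          constructor
          · intro hi
            exact Fin.le_def.mp (A.le_max' i ((hc0 i).mpr hi))
          · intro hi
            exact le_trans htm0 (hra (Fin.le_def.mpr hi))
        have h1 := hpre0 (m0 : ℕ) m0.isLt
        rw [hconv (m0 : ℕ) m0.isLt, ← hAeq, hyA] at h1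
        linarith
      rcases lt_or_gt_of_ne hne with hlt | hgt
      · -- ra k < ra j
        have htk : ra k < t := by rw [htdef]; linarith
        have htj : t < ra j := by rw [htdef]; linarith
        have hjA : j ∈ A := (hc0 j).mpr htj.le
        have hkA : k ∉ A := fun h => absurd ((hc0 k).mp h) (not_le.mpr htk)
        obtain ⟨hin, _⟩ := (slack_bound B ra hB0 hrow hcol A t hA1 hA2).2 (hApre ⟨j, hjA⟩)
        exact absurd (hin j hjA htj k hkA) (ne_of_gt hBpos)
      · -- ra j < ra k
        have htj : ra j < t := by rw [htdef]; linarith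
        have htk : t < ra k := by rw [htdef]; linarith
        have hkA : k ∈ A := (hc0 k).mpr htk.le
        have hjA : j ∉ A := fun h => absurd ((hc0 j).mp h) (not_le.mpr htj)
        obtain ⟨_, hout⟩ := (slack_bound B ra hB0 hrow hcol A t hA1 hA2).2 (hApre ⟨k, hkA⟩)
        exact absurd (hout j hjA htj k hkA) (ne_of_gt hBpos)
    have hMDM : M * D * Mᴴ = D := by
      ext k l
      have hterm : ∀ j', (M * D) k j' * Mᴴ j' l = (ra k : ℂ) * (M k j' * star (M l j')) := by
        intro j'
        rw [hDdef, Matrix.mul_diagonal, Matrix.conjTranspose_apply]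
        by_cases h : M k j' = 0
        · simp [h]
        · rw [← hblock k j' h]; ring
      rw [Matrix.mul_apply, Finset.sum_congr rfl fun j' _ => hterm j', ← Finset.mul_sum]
      have h1 : ∑ j', M k j' * star (M l j') = (1 : Matrix (Fin d) (Fin d) ℂ) k l := by
        rw [← hM1, Matrix.mul_apply]
        exact Finset.sum_congr rfl fun j' _ => by rw [Matrix.conjTranspose_apply]
      rw [h1]
      simp only [hDdef, Matrix.one_apply, Matrix.diagonal_apply]
      split <;> simp
    rw [htgt, hσW, hWVM]
    calc V * M * D * (V * M)ᴴ = V * (M * D * Mᴴ) * Vᴴ := by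
          rw [Matrix.conjTranspose_mul]; simp only [Matrix.mul_assoc]
      _ = V * D * Vᴴ := by rw [hMDM]
  · intro hσV'
    have hσV : σ = V * D * Vᴴ := by rw [hσV', htgt]
    have hMDM : M * D * Mᴴ = D := by
      have h1 : W * D * Wᴴ = V * D * Vᴴ := hσW.symm.trans hσV
      have h2 : M * D * Mᴴ = Vᴴ * (W * D * Wᴴ) * V := by
        rw [hMdef, Matrix.conjTranspose_mul, Matrix.conjTranspose_conjTranspose]
        simp only [Matrix.mul_assoc]
      rw [h2, h1]
      calc Vᴴ * (V * D * Vᴴ) * V = (Vᴴ * V) * D * (Vᴴ * V) := by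
            simp only [Matrix.mul_assoc]
        _ = D := by rw [hV1, Matrix.one_mul, Matrix.mul_one]
    have hx : ∀ k, x k = ra k := by
      intro k
      have h := congrFun (congrFun hMDM k) k
      have hl : (M * D * Mᴴ) k k = ((x k : ℝ) : ℂ) := by
        rw [Matrix.mul_apply]
        simp only [hxdef]
        push_cast
        refine Finset.sum_congr rfl fun j _ => ?_
        rw [hDdef, Matrix.mul_diagonal, Matrix.conjTranspose_apply]
        simp only [hBdef]
        rw [← mul_star_self_eq_normSq]
        ring
      have hr : (M * D * Mᴴ) k k = ((ra k : ℝ) : ℂ) := by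
        rw [hMDM, hDdef, Matrix.diagonal_apply_eq]
      exact Complex.ofReal_injective (hl.symm.trans hr)
    rw [hS]
    refine Finset.sum_eq_zero fun k _ => ?_
    rw [hx k, sub_self, mul_zero]
end

section
/- Corollary (counterexample direction): let ρ_SA = Σ_{a,k} q_{ak} |r_k⟩⟨r_k| ⊗ |φ_a⟩⟨φ_a|, where {|r_k⟩} is orthonormal, {|φ_a⟩} are (possibly non-orthogonal) unit vectors, q_{ak} ≥ 0 sum to 1, and q_{ak} ≥ q_{a,k+1} for all a, with Hamiltonian eigenbasis {|r_k⟩} and ε_1 ≤ ... ≤ ε_d. Then for every complete projective measurement {Π_a} on the ancilla, W_{{Π_a}} − W = 0; in particular δW = 0. -/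
open Matrix Kronecker BigOperators ComplexOrder

/-! ### Auxiliary lemmas -/

open Polynomial in
theorem aux_charpoly_unitary_conj {n : Type*} [Fintype n] [DecidableEq n] (U A : Matrix n n ℂ)
    (hU : U * Uᴴ = 1) : (U * A * Uᴴ).charpoly = A.charpoly := by
  have hmap : (C : ℂ →+* ℂ[X]).mapMatrix U * (C : ℂ →+* ℂ[X]).mapMatrix Uᴴ = 1 := by
    rw [RingHom.mapMatrix_apply, RingHom.mapMatrix_apply, ← Matrix.map_mul, hU]
    simp
  have h1 : charmatrix (U * A * Uᴴ) =
      (C : ℂ →+* ℂ[X]).mapMatrix U * charmatrix A * (C : ℂ →+* ℂ[X]).mapMatrix Uᴴ := by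
    rw [charmatrix, charmatrix, mul_sub, sub_mul]
    congr 1
    · rw [Matrix.scalar_apply, ← Matrix.smul_one_eq_diagonal, mul_smul_comm, smul_mul_assoc,
        mul_one, hmap]
    · simp [Matrix.mul_assoc]
  have hdet : ((C : ℂ →+* ℂ[X]).mapMatrix U).det * ((C : ℂ →+* ℂ[X]).mapMatrix Uᴴ).det = 1 := by
    rw [← det_mul, hmap, det_one]
  rw [Matrix.charpoly, Matrix.charpoly, h1, det_mul, det_mul]
  calc ((C : ℂ →+* ℂ[X]).mapMatrix U).det * (charmatrix A).det *
        ((C : ℂ →+* ℂ[X]).mapMatrix Uᴴ).det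
      = ((C : ℂ →+* ℂ[X]).mapMatrix U).det * ((C : ℂ →+* ℂ[X]).mapMatrix Uᴴ).det *
        (charmatrix A).det := by ring
    _ = (charmatrix A).det := by rw [hdet, one_mul]

open Polynomial in
theorem aux_charpoly_diagonal {n : Type*} [Fintype n] [DecidableEq n] (w : n → ℂ) :
    (diagonal w).charpoly = ∏ i, (X - C (w i)) := by
  rw [Matrix.charpoly]
  have : charmatrix (diagonal w) = diagonal (fun i => (X : ℂ[X]) - C (w i)) := by
    ext i j
    by_cases h : i = j
    · subst h; simp [charmatrix_apply_eq]
    · simp [charmatrix_apply_ne _ _ _ h, diagonal_apply_ne _ h]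
  rw [this, det_diagonal]

theorem aux_roots_perm {d : ℕ} (f g : Fin d → ℝ)
    (h : Finset.univ.val.map (fun k => ((f k : ℂ))) = Finset.univ.val.map (fun k => ((g k : ℂ)))) :
    (List.ofFn f).Perm (List.ofFn g) := by
  have h2 : Finset.univ.val.map f = Finset.univ.val.map g := by
    apply Multiset.map_injective (Complex.ofReal_injective)
    rwa [Multiset.map_map, Multiset.map_map]
  rw [← Multiset.coe_eq_coe, List.ofFn_eq_map, List.ofFn_eq_map]
  have huniv : (Finset.univ : Finset (Fin d)).val = ↑(List.finRange d) := by
    rw [Fin.univ_def]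
  rw [huniv] at h2
  rwa [Multiset.map_coe, Multiset.map_coe] at h2

open Polynomial in
theorem aux_passiveEnergy_sum_rankOne {d : ℕ} (ε : Fin d → ℝ) (v : Fin d → Fin d → ℂ)
    (hv : ∀ j k, star (v j) ⬝ᵥ v k = if j = k then (1:ℂ) else 0)
    (lam : Fin d → ℝ) (hlam : Antitone lam) :
    passiveEnergy ε (∑ k, (lam k : ℂ) • vecMulVec (v k) (star (v k))) = ∑ k, lam k * ε k := by
  set σ : Matrix (Fin d) (Fin d) ℂ := ∑ k, (lam k : ℂ) • vecMulVec (v k) (star (v k)) with hσdef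
  set U : Matrix (Fin d) (Fin d) ℂ := Matrix.of (fun i k => v k i) with hUdef
  have hUU : Uᴴ * U = 1 := by
    ext j k
    simp only [Matrix.mul_apply, Matrix.conjTranspose_apply, hUdef, Matrix.of_apply,
      Matrix.one_apply]
    rw [← hv j k]
    simp [dotProduct, Pi.star_apply]
  have hU : U * Uᴴ = 1 := mul_eq_one_comm.mp hUU
  have hσ : σ = U * diagonal (fun k => (lam k : ℂ)) * Uᴴ := by
    ext i j
    rw [Matrix.mul_assoc, Matrix.mul_apply]
    simp only [hσdef, Matrix.sum_apply, Matrix.smul_apply, Matrix.vecMulVec_apply,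
      Matrix.diagonal_mul, Matrix.conjTranspose_apply, hUdef, Matrix.of_apply, smul_eq_mul,
      Pi.star_apply, RCLike.star_def]
    apply Finset.sum_congr rfl
    intro k _
    ring
  have herm : σ.IsHermitian := by
    rw [hσ]
    unfold Matrix.IsHermitian
    rw [Matrix.conjTranspose_mul, Matrix.conjTranspose_mul, Matrix.conjTranspose_conjTranspose,
      Matrix.diagonal_conjTranspose]
    have hstar : star (fun k => ((lam k : ℂ))) = fun k => ((lam k : ℂ)) := by
      funext k
      simp [Complex.conj_ofReal]
    rw [hstar, Matrix.mul_assoc]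
  have hchar : σ.charpoly = ∏ k, (X - C ((lam k : ℂ))) := by
    rw [hσ, aux_charpoly_unitary_conj _ _ hU, aux_charpoly_diagonal]
  have hchar2 : σ.charpoly = ∏ k, (X - C ((herm.eigenvalues k : ℂ))) := by
    have hspec := herm.spectral_theorem
    have hV : (herm.eigenvectorUnitary : Matrix (Fin d) (Fin d) ℂ) *
        (herm.eigenvectorUnitary : Matrix (Fin d) (Fin d) ℂ)ᴴ = 1 := by
      simpa [Matrix.star_eq_conjTranspose] using
        (Matrix.mem_unitaryGroup_iff.mp herm.eigenvectorUnitary.2)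
    calc σ.charpoly = ((herm.eigenvectorUnitary : Matrix (Fin d) (Fin d) ℂ) *
          diagonal (RCLike.ofReal ∘ herm.eigenvalues) *
          (herm.eigenvectorUnitary : Matrix (Fin d) (Fin d) ℂ)ᴴ).charpoly := by
          rw [Unitary.conjStarAlgAut_apply] at hspec
          rw [← Matrix.star_eq_conjTranspose, ← hspec]
      _ = (diagonal (RCLike.ofReal ∘ herm.eigenvalues)).charpoly :=
          aux_charpoly_unitary_conj _ _ hV
      _ = ∏ k, (X - C ((herm.eigenvalues k : ℂ))) := by
          rw [aux_charpoly_diagonal]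
          rfl
  have hmult : Finset.univ.val.map (fun k => ((herm.eigenvalues k : ℂ))) =
      Finset.univ.val.map (fun k => ((lam k : ℂ))) := by
    have r1 := Polynomial.roots_multiset_prod_X_sub_C
      (Finset.univ.val.map (fun k => ((lam k : ℂ))))
    have r2 := Polynomial.roots_multiset_prod_X_sub_C
      (Finset.univ.val.map (fun k => ((herm.eigenvalues k : ℂ))))
    rw [Multiset.map_map] at r1 r2
    have e1 : (Multiset.map ((fun a => X - C a) ∘ fun k => ((lam k : ℂ))) Finset.univ.val).prod
        = ∏ k, (X - C ((lam k : ℂ))) := rfl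
    have e2 : (Multiset.map ((fun a => X - C a) ∘ fun k => ((herm.eigenvalues k : ℂ)))
        Finset.univ.val).prod = ∏ k, (X - C ((herm.eigenvalues k : ℂ))) := rfl
    rw [e1] at r1; rw [e2] at r2
    rw [← r1, ← r2, ← hchar, ← hchar2]
  have hperm : (List.ofFn herm.eigenvalues).Perm (List.ofFn lam) := aux_roots_perm _ _ hmult
  have hsortedlam : Monotone (lam ∘ Fin.revPerm) := by
    intro i j hij
    exact hlam (by simpa using Fin.rev_le_rev.mpr hij)
  have hkey : herm.eigenvalues ∘ Tuple.sort herm.eigenvalues = lam ∘ Fin.revPerm := by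
    apply List.ofFn_injective
    have s1 : (List.ofFn (herm.eigenvalues ∘ Tuple.sort herm.eigenvalues)).SortedLE :=
      List.sortedLE_ofFn_iff.mpr (Tuple.monotone_sort _)
    have s2 : (List.ofFn (lam ∘ Fin.revPerm)).SortedLE :=
      List.sortedLE_ofFn_iff.mpr hsortedlam
    exact List.Perm.eq_of_sortedLE s1 s2
      (((Equiv.Perm.ofFn_comp_perm _ _).trans hperm).trans
        (Equiv.Perm.ofFn_comp_perm _ _).symm)
  rw [passiveEnergy, dif_pos herm]
  apply Finset.sum_congr rfl
  intro k _
  rw [hkey]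
  simp [Fin.rev_rev]

section auxHelpers
variable {d m : ℕ}

theorem aux_ptrA_kron (A : Matrix (Fin d) (Fin d) ℂ) (B : Matrix (Fin m) (Fin m) ℂ) :
    ptrA (A ⊗ₖ B) = B.trace • A := by
  ext i j
  simp only [ptrA, kroneckerMap_apply, Matrix.smul_apply, Matrix.trace, Matrix.diag,
    smul_eq_mul, Finset.sum_mul]
  exact Finset.sum_congr rfl fun a _ => mul_comm _ _

theorem aux_ptrA_sum {ι : Type*} (s : Finset ι)
    (f : ι → Matrix (Fin d × Fin m) (Fin d × Fin m) ℂ) :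
    ptrA (∑ x ∈ s, f x) = ∑ x ∈ s, ptrA (f x) := by
  ext i j
  simp only [ptrA, Matrix.sum_apply]
  rw [Finset.sum_comm]

theorem aux_ptrA_smul (c : ℂ) (M : Matrix (Fin d × Fin m) (Fin d × Fin m) ℂ) :
    ptrA (c • M) = c • ptrA M := by
  ext i j
  simp [ptrA, Finset.mul_sum]

theorem aux_trace_vecMulVec (a b : Fin m → ℂ) : (vecMulVec a b).trace = a ⬝ᵥ b := by
  simp [Matrix.trace, Matrix.diag, vecMulVec_apply, dotProduct]

theorem aux_mul_vecMulVec (M : Matrix (Fin m) (Fin m) ℂ) (a b : Fin m → ℂ) :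
    M * vecMulVec a b = vecMulVec (M *ᵥ a) b := by
  ext i j
  simp only [Matrix.mul_apply, vecMulVec_apply, Matrix.mulVec, dotProduct, Finset.sum_mul]
  exact Finset.sum_congr rfl fun x _ => by ring

theorem aux_vecMulVec_mul (M : Matrix (Fin m) (Fin m) ℂ) (a b : Fin m → ℂ) :
    vecMulVec a b * M = vecMulVec a (b ᵥ* M) := by
  ext i j
  simp only [Matrix.mul_apply, vecMulVec_apply, Matrix.vecMul, dotProduct, Finset.mul_sum]
  exact Finset.sum_congr rfl fun x _ => by ring

theorem aux_proj_vecMulVec (P : Matrix (Fin m) (Fin m) ℂ) (hP : P.IsHermitian) (a : Fin m → ℂ) :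
    P * vecMulVec a (star a) * P = vecMulVec (P *ᵥ a) (star (P *ᵥ a)) := by
  rw [aux_mul_vecMulVec, aux_vecMulVec_mul, Matrix.star_mulVec, hP.eq]

theorem aux_dot_self_re (w : Fin m → ℂ) :
    ((star w ⬝ᵥ w : ℂ) = ((star w ⬝ᵥ w : ℂ).re : ℝ)) ∧ 0 ≤ (star w ⬝ᵥ w : ℂ).re := by
  have h : (0 : ℂ) ≤ star w ⬝ᵥ w := dotProduct_star_self_nonneg w
  rw [Complex.le_def] at h
  exact ⟨(Complex.ext_iff.mpr ⟨by simp, by simp [← h.2]⟩).symm, by simpa using h.1⟩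

theorem aux_proj_dot (P : Matrix (Fin m) (Fin m) ℂ) (hP : P.IsHermitian) (hPP : P * P = P)
    (φv : Fin m → ℂ) :
    star φv ⬝ᵥ (P *ᵥ φv) = star (P *ᵥ φv) ⬝ᵥ (P *ᵥ φv) := by
  conv_lhs => rw [← hPP]
  rw [← Matrix.mulVec_mulVec, Matrix.dotProduct_mulVec, Matrix.star_mulVec, hP.eq]

end auxHelpers

theorem aux_key_lemma {d m s : ℕ} (ε : Fin d → ℝ)
    (v : Fin d → Fin d → ℂ)
    (hv : ∀ j k, star (v j) ⬝ᵥ v k = if j = k then (1 : ℂ) else 0)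
    (φ : Fin s → Fin m → ℂ)
    (q : Fin s → Fin d → ℝ)
    (hq0 : ∀ a k, 0 ≤ q a k)
    (hqd : ∀ a, Antitone (q a))
    (ρ : Matrix (Fin d × Fin m) (Fin d × Fin m) ℂ)
    (hρ : ρ = ∑ a, ∑ k, (q a k : ℂ) •
      (vecMulVec (v k) (star (v k)) ⊗ₖ vecMulVec (φ a) (star (φ a))))
    (P : Matrix (Fin m) (Fin m) ℂ) (hP : P.IsHermitian) (hPP : P * P = P) :
    outcomeProb ρ P * passiveEnergy ε (condState ρ P) =
      ∑ k, (∑ b, q b k * (star (P *ᵥ φ b) ⬝ᵥ (P *ᵥ φ b)).re) * ε k := by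
  set r : Fin s → ℝ := fun b => (star (P *ᵥ φ b) ⬝ᵥ (P *ᵥ φ b)).re with hrdef
  have hrC : ∀ b, (star (P *ᵥ φ b) ⬝ᵥ (P *ᵥ φ b) : ℂ) = (r b : ℂ) := fun b =>
    (aux_dot_self_re _).1
  have hr0 : ∀ b, 0 ≤ r b := fun b => (aux_dot_self_re _).2
  have htraceV : ∀ k, (vecMulVec (v k) (star (v k))).trace = 1 := by
    intro k
    rw [aux_trace_vecMulVec, dotProduct_comm, hv k k, if_pos rfl]
  have htraceP : ∀ b, (P * vecMulVec (φ b) (star (φ b))).trace = (r b : ℂ) := by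
    intro b
    rw [aux_mul_vecMulVec, aux_trace_vecMulVec, dotProduct_comm,
      aux_proj_dot P hP hPP, hrC b]
  have hprob : outcomeProb ρ P = ∑ b, ∑ k, q b k * r b := by
    rw [outcomeProb, hρ]
    simp only [Finset.mul_sum, Matrix.mul_sum, Matrix.mul_smul, ← mul_kronecker_mul,
      Matrix.one_mul, Matrix.trace_sum, Matrix.trace_smul, trace_kronecker, htraceV,
      htraceP, one_mul, smul_eq_mul, Complex.re_sum]
    apply Finset.sum_congr rfl; intro b _
    apply Finset.sum_congr rfl; intro k _
    rw [← Complex.ofReal_mul, Complex.ofReal_re]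
  have hptra : ptrA (((1 : Matrix (Fin d) (Fin d) ℂ) ⊗ₖ P) * ρ *
      ((1 : Matrix (Fin d) (Fin d) ℂ) ⊗ₖ P)) =
      ∑ k, ((∑ b, q b k * r b : ℝ) : ℂ) • vecMulVec (v k) (star (v k)) := by
    rw [hρ]
    simp only [Matrix.mul_sum, Matrix.sum_mul, Matrix.mul_smul, Matrix.smul_mul,
      ← mul_kronecker_mul, Matrix.one_mul, Matrix.mul_one, aux_ptrA_sum, aux_ptrA_smul,
      aux_ptrA_kron, aux_proj_vecMulVec P hP]
    rw [Finset.sum_comm]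
    apply Finset.sum_congr rfl; intro k _
    have hterm : ∀ b : Fin s, (q b k : ℂ) •
        ((vecMulVec (P *ᵥ φ b) (star (P *ᵥ φ b))).trace • vecMulVec (v k) (star (v k)))
        = ((q b k * r b : ℝ) : ℂ) • vecMulVec (v k) (star (v k)) := by
      intro b
      rw [aux_trace_vecMulVec, dotProduct_comm, hrC b, smul_smul, ← Complex.ofReal_mul]
    rw [Finset.sum_congr rfl (fun b _ => hterm b), ← Finset.sum_smul, ← Complex.ofReal_sum]
  set c : Fin d → ℝ := fun k => ∑ b, q b k * r b with hcdef
  have hc0 : ∀ k, 0 ≤ c k := fun k =>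
    Finset.sum_nonneg fun b _ => mul_nonneg (hq0 b k) (hr0 b)
  have hcanti : Antitone c := by
    intro k k' hkk'
    exact Finset.sum_le_sum fun b _ => mul_le_mul_of_nonneg_right (hqd b hkk') (hr0 b)
  by_cases hp : outcomeProb ρ P = 0
  · rw [hp, zero_mul]
    have hall : ∀ b ∈ Finset.univ, ∀ k ∈ Finset.univ, q b k * r b = 0 := by
      have h := hp
      rw [hprob] at h
      intro b hb
      have hb2 := (Finset.sum_eq_zero_iff_of_nonneg (fun b _ =>
        Finset.sum_nonneg fun k _ => mul_nonneg (hq0 b k) (hr0 b))).mp h b hb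
      exact fun k hk => (Finset.sum_eq_zero_iff_of_nonneg (fun k _ =>
        mul_nonneg (hq0 b k) (hr0 b))).mp hb2 k hk
    symm
    apply Finset.sum_eq_zero
    intro k _
    have hck : c k = 0 := Finset.sum_eq_zero fun b hb => hall b hb k (Finset.mem_univ k)
    rw [hcdef] at hck
    simp only at hck
    rw [hck, zero_mul]
  · have hcond : condState ρ P = ∑ k, ((((outcomeProb ρ P)⁻¹ * c k : ℝ)) : ℂ) •
        vecMulVec (v k) (star (v k)) := by
      rw [condState, hptra, Finset.smul_sum]
      apply Finset.sum_congr rfl; intro k _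
      ext i j
      simp only [Matrix.smul_apply, smul_eq_mul, Complex.real_smul, hcdef]
      push_cast
      ring
    have hpassive : passiveEnergy ε (condState ρ P) =
        ∑ k, ((outcomeProb ρ P)⁻¹ * c k) * ε k := by
      rw [hcond]
      apply aux_passiveEnergy_sum_rankOne ε v hv
      intro k k' hkk'
      have hpinv : 0 ≤ (outcomeProb ρ P)⁻¹ := by
        apply inv_nonneg.mpr
        rw [hprob]
        exact Finset.sum_nonneg fun b _ => Finset.sum_nonneg fun k _ =>
          mul_nonneg (hq0 b k) (hr0 b)
      exact mul_le_mul_of_nonneg_left (hcanti hkk') hpinv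
    rw [hpassive, Finset.mul_sum]
    apply Finset.sum_congr rfl; intro k _
    have hre : outcomeProb ρ P * ((outcomeProb ρ P)⁻¹ * c k * ε k)
        = (outcomeProb ρ P * (outcomeProb ρ P)⁻¹) * (c k * ε k) := by ring
    rw [hre, mul_inv_cancel₀ hp, one_mul]

/-- Corollary, counterexample direction: for
ρ_SA = ∑_{a,k} q_{ak} |rₖ⟩⟨rₖ| ⊗ |φₐ⟩⟨φₐ| with {|φₐ⟩} possibly non-orthogonal
unit vectors and q_{ak} decreasing in k for each a, every projective ancilla
measurement gives W_{Πₐ} − W = 0; in particular δW = 0. -/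
theorem cq_state_zero_gain {d m s : ℕ}
    (ε : Fin d → ℝ) (hε : Monotone ε)
    (v : Fin d → Fin d → ℂ)
    (hv : ∀ j k, star (v j) ⬝ᵥ v k = if j = k then (1 : ℂ) else 0)
    (φ : Fin s → Fin m → ℂ)
    (hφ : ∀ a, star (φ a) ⬝ᵥ φ a = (1 : ℂ))
    (q : Fin s → Fin d → ℝ)
    (hq0 : ∀ a k, 0 ≤ q a k) (hq1 : ∑ a, ∑ k, q a k = 1)
    (hqd : ∀ a, Antitone (q a))
    (ρ : Matrix (Fin d × Fin m) (Fin d × Fin m) ℂ)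
    (hρ : ρ = ∑ a, ∑ k, (q a k : ℂ) •
      (vecMulVec (v k) (star (v k)) ⊗ₖ vecMulVec (φ a) (star (φ a)))) :
    (∀ (n : ℕ) (P : Fin n → Matrix (Fin m) (Fin m) ℂ),
      (∀ a, (P a).IsHermitian) →
      (∀ a b, P a * P b = if a = b then P a else 0) →
      (∑ a, P a = 1) →
      ∑ a, outcomeProb ρ (P a) * passiveEnergy ε (condState ρ (P a)) =
        passiveEnergy ε (ptrA ρ)) ∧
    deltaW ε ρ = 0 := by
  have hpassW : passiveEnergy ε (ptrA ρ) = ∑ k, (∑ b, q b k) * ε k := by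
    have hptrA : ptrA ρ = ∑ k, ((∑ b, q b k : ℝ) : ℂ) • vecMulVec (v k) (star (v k)) := by
      rw [hρ]
      have htr : ∀ b : Fin s, (vecMulVec (φ b) (star (φ b))).trace = 1 := by
        intro b
        rw [aux_trace_vecMulVec, dotProduct_comm, hφ b]
      simp only [aux_ptrA_sum, aux_ptrA_smul, aux_ptrA_kron, htr, one_smul]
      rw [Finset.sum_comm]
      apply Finset.sum_congr rfl; intro k _
      rw [← Finset.sum_smul, ← Complex.ofReal_sum]
    rw [hptrA]
    apply aux_passiveEnergy_sum_rankOne ε v hv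
    intro k k' hkk'
    exact Finset.sum_le_sum fun b _ => hqd b hkk'
  have part1 : ∀ (n : ℕ) (P : Fin n → Matrix (Fin m) (Fin m) ℂ),
      (∀ a, (P a).IsHermitian) →
      (∀ a b, P a * P b = if a = b then P a else 0) →
      (∑ a, P a = 1) →
      ∑ a, outcomeProb ρ (P a) * passiveEnergy ε (condState ρ (P a)) =
        passiveEnergy ε (ptrA ρ) := by
    intro n P hherm horth hsum
    have hidem : ∀ a, P a * P a = P a := by
      intro a
      rw [horth a a, if_pos rfl]
    have hkey : ∀ a, outcomeProb ρ (P a) * passiveEnergy ε (condState ρ (P a)) =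
        ∑ k, (∑ b, q b k * (star (P a *ᵥ φ b) ⬝ᵥ (P a *ᵥ φ b)).re) * ε k := fun a =>
      aux_key_lemma ε v hv φ q hq0 hqd ρ hρ (P a) (hherm a) (hidem a)
    have hsum_r : ∀ b, ∑ a, (star (P a *ᵥ φ b) ⬝ᵥ (P a *ᵥ φ b)).re = 1 := by
      intro b
      have hstep : ∀ a, (star (P a *ᵥ φ b) ⬝ᵥ (P a *ᵥ φ b)) =
          star (φ b) ⬝ᵥ (P a *ᵥ φ b) := fun a =>
        (aux_proj_dot (P a) (hherm a) (hidem a) (φ b)).symm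
      have hsumC : ∑ a, (star (φ b) ⬝ᵥ (P a *ᵥ φ b)) = 1 := by
        have hF : ∀ M N : Matrix (Fin m) (Fin m) ℂ,
            star (φ b) ⬝ᵥ ((M + N) *ᵥ φ b) =
              star (φ b) ⬝ᵥ (M *ᵥ φ b) + star (φ b) ⬝ᵥ (N *ᵥ φ b) := by
          intro M N
          rw [Matrix.add_mulVec, dotProduct_add]
        have hmap := map_sum (AddMonoidHom.mk'
          (fun M : Matrix (Fin m) (Fin m) ℂ => star (φ b) ⬝ᵥ (M *ᵥ φ b)) hF) P Finset.univ
        simp only [AddMonoidHom.mk'_apply] at hmap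
        rw [← hmap, hsum, Matrix.one_mulVec, hφ b]
      calc ∑ a, (star (P a *ᵥ φ b) ⬝ᵥ (P a *ᵥ φ b)).re
          = ∑ a, (star (φ b) ⬝ᵥ (P a *ᵥ φ b)).re := by
            apply Finset.sum_congr rfl; intro a _; rw [hstep a]
        _ = (∑ a, (star (φ b) ⬝ᵥ (P a *ᵥ φ b))).re := (Complex.re_sum _ _).symm
        _ = 1 := by rw [hsumC, Complex.one_re]
    rw [hpassW]
    calc ∑ a, outcomeProb ρ (P a) * passiveEnergy ε (condState ρ (P a))
        = ∑ a, ∑ k, (∑ b, q b k * (star (P a *ᵥ φ b) ⬝ᵥ (P a *ᵥ φ b)).re) * ε k := by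
          apply Finset.sum_congr rfl; intro a _; rw [hkey a]
      _ = ∑ k, (∑ a, ∑ b, q b k * (star (P a *ᵥ φ b) ⬝ᵥ (P a *ᵥ φ b)).re) * ε k := by
          rw [Finset.sum_comm]
          apply Finset.sum_congr rfl; intro k _
          rw [Finset.sum_mul]
      _ = ∑ k, (∑ b, q b k) * ε k := by
          apply Finset.sum_congr rfl; intro k _
          congr 1
          rw [Finset.sum_comm]
          calc ∑ b, ∑ a, q b k * (star (P a *ᵥ φ b) ⬝ᵥ (P a *ᵥ φ b)).re
              = ∑ b, q b k * ∑ a, (star (P a *ᵥ φ b) ⬝ᵥ (P a *ᵥ φ b)).re := by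
                apply Finset.sum_congr rfl; intro b _
                rw [Finset.mul_sum]
            _ = ∑ b, q b k := by
                apply Finset.sum_congr rfl; intro b _
                rw [hsum_r b, mul_one]
  refine ⟨part1, ?_⟩
  have hS : {g : ℝ | ∃ (n : ℕ) (P : Fin n → Matrix (Fin m) (Fin m) ℂ),
      (∀ a, (P a).IsHermitian) ∧ (∀ a b, P a * P b = if a = b then P a else 0) ∧
      (∑ a, P a = 1) ∧
      g = passiveEnergy ε (ptrA ρ) -
        ∑ a, outcomeProb ρ (P a) * passiveEnergy ε (condState ρ (P a))} = {0} := by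
    ext g
    simp only [Set.mem_setOf_eq, Set.mem_singleton_iff]
    constructor
    · rintro ⟨n, P, h1, h2, h3, rfl⟩
      rw [part1 n P h1 h2 h3, sub_self]
    · rintro rfl
      refine ⟨1, fun _ => (1 : Matrix (Fin m) (Fin m) ℂ), fun a => Matrix.isHermitian_one,
        ?_, ?_, ?_⟩
      · intro a b
        rw [if_pos (Subsingleton.elim a b), Matrix.one_mul]
      · simp
      · rw [part1 1 (fun _ => (1 : Matrix (Fin m) (Fin m) ℂ)) (fun a => Matrix.isHermitian_one)
          (fun a b => by rw [if_pos (Subsingleton.elim a b), Matrix.one_mul]) (by simp),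
          sub_self]
  rw [deltaW, hS, csSup_singleton]
end

section
/- Lower-bound family in the gain–concurrence plane: for the two-qubit state ρ_SA supported on span{|01⟩,|10⟩} with ⟨01|ρ|01⟩ = x, ⟨10|ρ|10⟩ = 1−x, ⟨01|ρ|10⟩ = C/2 (all real, with C ≤ 2√(x(1−x)), x ∈ [0,1]) and H_S = −σ_z, the daemonic gain satisfies δW = 2 − 2x − max{0, 2 − 4x}; minimizing over the two admissible values x = (1 ± √(1−C²))/2 gives δW = 1 − √(1−C²), where C is the concurrence of ρ_SA. -/
open Matrix Kronecker BigOperators ComplexOrder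

/-- The two-qubit state supported on span{|01⟩, |10⟩} with populations x, 1−x
and coherence C/2. -/
noncomputable def lowerState (x C : ℝ) :
    Matrix (Fin 2 × Fin 2) (Fin 2 × Fin 2) ℂ := fun p q =>
  if p = ((0 : Fin 2), (1 : Fin 2)) ∧ q = ((0 : Fin 2), (1 : Fin 2)) then (x : ℂ)
  else if p = ((1 : Fin 2), (0 : Fin 2)) ∧ q = ((1 : Fin 2), (0 : Fin 2)) then
    ((1 - x : ℝ) : ℂ)
  else if (p = ((0 : Fin 2), (1 : Fin 2)) ∧ q = ((1 : Fin 2), (0 : Fin 2))) ∨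
          (p = ((1 : Fin 2), (0 : Fin 2)) ∧ q = ((0 : Fin 2), (1 : Fin 2))) then
    ((C / 2 : ℝ) : ℂ)
  else 0


lemma ptrA_lowerState (x C : ℝ) :
    ptrA (lowerState x C) = !![(x:ℂ), 0; 0, 1-(x:ℂ)] := by
  ext i j
  fin_cases i <;> fin_cases j <;>
    simp [ptrA, lowerState, Fin.sum_univ_two, Prod.ext_iff]

lemma tau_eq (x C : ℝ) (Q : Matrix (Fin 2) (Fin 2) ℂ) (hQ2 : Q * Q = Q) :
    ptrA (((1 : Matrix (Fin 2) (Fin 2) ℂ) ⊗ₖ Q) * lowerState x C *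
        ((1 : Matrix (Fin 2) (Fin 2) ℂ) ⊗ₖ Q)) =
      !![(x:ℂ) * Q 1 1, ((C/2 :ℝ):ℂ) * Q 0 1;
         ((C/2 :ℝ):ℂ) * Q 1 0, (1-(x:ℂ)) * Q 0 0] := by
  have hq : ∀ i j, Q i 0 * Q 0 j + Q i 1 * Q 1 j = Q i j := fun i j => by
    have := congrFun (congrFun hQ2 i) j
    simpa [Matrix.mul_apply, Fin.sum_univ_two] using this
  ext i j
  fin_cases i <;> fin_cases j <;>
    simp [ptrA, lowerState, Matrix.mul_apply, Matrix.kroneckerMap_apply,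
      Fintype.sum_prod_type, Fin.sum_univ_two, Matrix.one_apply, Prod.ext_iff] <;>
    push_cast
  · linear_combination (x:ℂ) * hq 1 1
  · linear_combination (C/2:ℂ) * hq 0 1
  · linear_combination (C/2:ℂ) * hq 1 0
  · linear_combination (1-(x:ℂ)) * hq 0 0

lemma proj_facts (Q : Matrix (Fin 2) (Fin 2) ℂ) (hQH : Q.IsHermitian) (hQ2 : Q * Q = Q) :
    Q 0 0 = ((Q 0 0).re : ℂ) ∧ Q 1 1 = ((Q 1 1).re : ℂ) ∧
    Q 1 0 = starRingEnd ℂ (Q 0 1) ∧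
    0 ≤ (Q 0 0).re ∧ 0 ≤ (Q 1 1).re ∧
    Complex.normSq (Q 0 1) ≤ (Q 0 0).re * (Q 1 1).re := by
  have h00 : starRingEnd ℂ (Q 0 0) = Q 0 0 := by
    have := congrFun (congrFun hQH 0) 0; rwa [Matrix.conjTranspose_apply] at this
  have h11 : starRingEnd ℂ (Q 1 1) = Q 1 1 := by
    have := congrFun (congrFun hQH 1) 1; rwa [Matrix.conjTranspose_apply] at this
  have h10 : Q 1 0 = starRingEnd ℂ (Q 0 1) := by
    have := congrFun (congrFun hQH 1) 0; rw [Matrix.conjTranspose_apply] at this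
    exact this.symm
  have hp : Q 0 0 = ((Q 0 0).re : ℂ) := (Complex.conj_eq_iff_re.mp h00).symm
  have hqq : Q 1 1 = ((Q 1 1).re : ℂ) := (Complex.conj_eq_iff_re.mp h11).symm
  set p := (Q 0 0).re
  set q := (Q 1 1).re
  set nr := Complex.normSq (Q 0 1) with hnr
  have hmc : Q 0 1 * Q 1 0 = (nr : ℂ) := by rw [h10, Complex.mul_conj]
  have e00 : Q 0 0 * Q 0 0 + Q 0 1 * Q 1 0 = Q 0 0 := by
    have := congrFun (congrFun hQ2 0) 0
    simpa [Matrix.mul_apply, Fin.sum_univ_two] using this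
  have e11 : Q 1 0 * Q 0 1 + Q 1 1 * Q 1 1 = Q 1 1 := by
    have := congrFun (congrFun hQ2 1) 1
    simpa [Matrix.mul_apply, Fin.sum_univ_two] using this
  have ep : p * p + nr = p := by
    have : ((p * p + nr : ℝ) : ℂ) = (p : ℂ) := by push_cast; rw [← hmc, ← hp]; exact e00
    exact_mod_cast this
  have eq' : q * q + nr = q := by
    have : ((q * q + nr : ℝ) : ℂ) = (q : ℂ) := by
      push_cast
      rw [← hmc, ← hqq]
      linear_combination e11
    exact_mod_cast this
  have hnr0 : 0 ≤ nr := Complex.normSq_nonneg _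
  have hp0 : 0 ≤ p := by nlinarith [sq_nonneg p]
  have hq0 : 0 ≤ q := by nlinarith [sq_nonneg q]
  refine ⟨hp, hqq, h10, hp0, hq0, ?_⟩
  -- det Q ∈ {0,1}
  have hdet : Q.det * Q.det = Q.det := by
    rw [← Matrix.det_mul, hQ2]
  have hdv : Q.det = ((p * q - nr : ℝ) : ℂ) := by
    rw [Matrix.det_fin_two, hp, hqq, hmc]; push_cast; ring
  rw [hdv] at hdet
  have : (p * q - nr) * (p * q - nr) = p * q - nr := by exact_mod_cast hdet
  nlinarith [this]

lemma outcome_eq (x C : ℝ) (Q : Matrix (Fin 2) (Fin 2) ℂ) :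
    outcomeProb (lowerState x C) Q = x * (Q 1 1).re + (1 - x) * (Q 0 0).re := by
  simp [outcomeProb, Matrix.trace, Matrix.diag, Matrix.mul_apply, Matrix.kroneckerMap_apply,
    Fintype.sum_prod_type, Fin.sum_univ_two, Matrix.one_apply, lowerState, Prod.ext_iff]
  ring
lemma trace_eq_sum_eig {A : Matrix (Fin 2) (Fin 2) ℂ} (hA : A.IsHermitian) :
    A.trace = ∑ i, (hA.eigenvalues i : ℂ) := by
  conv_lhs => rw [hA.spectral_theorem]
  rw [Unitary.conjStarAlgAut_apply]
  rw [Matrix.trace_mul_cycle]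
  rw [show (star (hA.eigenvectorUnitary : Matrix (Fin 2) (Fin 2) ℂ)) *
      (hA.eigenvectorUnitary : Matrix (Fin 2) (Fin 2) ℂ) = 1 from
    (Matrix.mem_unitaryGroup_iff').mp (hA.eigenvectorUnitary).2, one_mul]
  simp [Matrix.trace_diagonal]

lemma herm_passive (σ : Matrix (Fin 2) (Fin 2) ℂ) (h : σ.IsHermitian) :
    passiveEnergy ![(-1:ℝ),1] σ = - Real.sqrt (σ.trace.re^2 - 4 * σ.det.re) := by
  rw [passiveEnergy, dif_pos h]
  set g : Fin 2 → ℝ := h.eigenvalues ∘ Tuple.sort h.eigenvalues with hg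
  have hmono : Monotone g := Tuple.monotone_sort h.eigenvalues
  have hle : g 0 ≤ g 1 := hmono (by norm_num)
  have hsum : g 0 + g 1 = σ.trace.re := by
    have := trace_eq_sum_eig h
    rw [Fin.sum_univ_two] at this
    have h2 : ∑ i, h.eigenvalues (Tuple.sort h.eigenvalues i) = ∑ i, h.eigenvalues i :=
      Equiv.sum_comp _ _
    rw [Fin.sum_univ_two, Fin.sum_univ_two] at h2
    have : σ.trace.re = h.eigenvalues 0 + h.eigenvalues 1 := by
      rw [this]; simp
    rw [this, ← h2]; rfl
  have hprod : g 0 * g 1 = σ.det.re := by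
    have := h.det_eq_prod_eigenvalues
    rw [Fin.prod_univ_two] at this
    have h2 : ∏ i, h.eigenvalues (Tuple.sort h.eigenvalues i) = ∏ i, h.eigenvalues i :=
      Equiv.prod_comp _ _
    rw [Fin.prod_univ_two, Fin.prod_univ_two] at h2
    have : σ.det.re = h.eigenvalues 0 * h.eigenvalues 1 := by
      rw [this]; push_cast; simp
    rw [this, ← h2]; rfl
  have hkey : σ.trace.re^2 - 4 * σ.det.re = (g 1 - g 0)^2 := by
    rw [← hsum, ← hprod]; ring
  rw [hkey, Real.sqrt_sq (by linarith)]
  rw [Fin.sum_univ_two]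
  show g (0:Fin 2).rev * _ + g (1:Fin 2).rev * _ = _
  norm_num [Fin.rev]
  ring

lemma term_eq (x C : ℝ) (hx0 : 0 ≤ x) (hx1 : x ≤ 1) (hC0 : 0 ≤ C)
    (hC : C ≤ 2 * Real.sqrt (x * (1 - x)))
    (Q : Matrix (Fin 2) (Fin 2) ℂ) (hQH : Q.IsHermitian) (hQ2 : Q * Q = Q) :
    outcomeProb (lowerState x C) Q *
      passiveEnergy ![(-1:ℝ),1] (condState (lowerState x C) Q) =
    - Real.sqrt ((x * (Q 1 1).re - (1-x) * (Q 0 0).re)^2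
        + C^2 * Complex.normSq (Q 0 1)) := by
  obtain ⟨hp, hq, h10, hp0, hq0, hnrle⟩ := proj_facts Q hQH hQ2
  set p := (Q 0 0).re with hpd
  set q := (Q 1 1).re with hqd
  set nr := Complex.normSq (Q 0 1) with hnrd
  have hnr0 : 0 ≤ nr := Complex.normSq_nonneg _
  have hxx : (0:ℝ) ≤ x * (1 - x) := mul_nonneg hx0 (by linarith)
  have hC2 : C^2 ≤ 4 * (x * (1 - x)) := by
    have := pow_le_pow_left₀ hC0 hC 2
    rw [mul_pow, Real.sq_sqrt hxx] at this
    linarith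
  have hkey : C^2 * nr ≤ 4 * (x * q) * ((1 - x) * p) := by
    have := mul_le_mul hC2 hnrle hnr0 (by linarith)
    nlinarith
  have hout := outcome_eq x C Q
  rw [← hpd, ← hqd] at hout
  set T := x * q + (1 - x) * p with hTd
  have hT0 : 0 ≤ T := by
    have := mul_nonneg hx0 hq0
    have := mul_nonneg (by linarith : (0:ℝ) ≤ 1 - x) hp0
    linarith
  have ha1 : 0 ≤ x * q := mul_nonneg hx0 hq0
  have ha2 : (0:ℝ) ≤ (1 - x) * p := mul_nonneg (by linarith) hp0
  rcases eq_or_lt_of_le hT0 with hT | hT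
  · -- zero-probability outcome
    have h1 : x * q = 0 := by nlinarith
    have h2 : (1 - x) * p = 0 := by nlinarith
    have h3 : (x * q - (1 - x) * p)^2 + C^2 * nr = 0 := by nlinarith [sq_nonneg C]
    rw [hout, ← hT, zero_mul, h3, Real.sqrt_zero, neg_zero]
  · -- positive-probability outcome
    have hTne : T ≠ 0 := ne_of_gt hT
    have hcs : condState (lowerState x C) Q = (T⁻¹ : ℝ) •
        !![((x*q : ℝ):ℂ), ((C/2 : ℝ):ℂ) * Q 0 1;
           ((C/2 : ℝ):ℂ) * starRingEnd ℂ (Q 0 1), (((1-x)*p : ℝ):ℂ)] := by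
      unfold condState
      rw [tau_eq x C Q hQ2, hout]
      congr 1
      ext i j
      fin_cases i <;> fin_cases j <;> simp [hp, hq, h10] <;> push_cast <;> ring
    rw [hcs]
    set M : Matrix (Fin 2) (Fin 2) ℂ :=
      !![((x*q : ℝ):ℂ), ((C/2 : ℝ):ℂ) * Q 0 1;
         ((C/2 : ℝ):ℂ) * starRingEnd ℂ (Q 0 1), (((1-x)*p : ℝ):ℂ)] with hMd
    have hMH : ((T⁻¹ : ℝ) • M).IsHermitian := by
      ext i j
      fin_cases i <;> fin_cases j <;>
        simp [hMd, Matrix.conjTranspose_apply, Matrix.smul_apply, Complex.real_smul,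
          _root_.map_mul, Complex.conj_ofReal]
    rw [herm_passive _ hMH, hout]
    have htr : ((T⁻¹ : ℝ) • M).trace.re = T⁻¹ * T := by
      simp [hMd, Matrix.trace_fin_two, Matrix.smul_apply, Complex.real_smul]
      push_cast
      ring
    have hmc : Q 0 1 * starRingEnd ℂ (Q 0 1) = (nr : ℂ) := Complex.mul_conj _
    have hdc : ((T⁻¹ : ℝ) • M).det =
        ((T⁻¹ * T⁻¹ * ((x*q) * ((1-x)*p) - (C/2)^2 * nr) : ℝ) : ℂ) := by
      rw [Matrix.det_fin_two]
      simp [hMd, Matrix.smul_apply, Complex.real_smul]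
      push_cast
      linear_combination (-(((T:ℝ):ℂ))⁻¹^2 * (((C:ℝ):ℂ))^2/4) * hmc
    have hdet : ((T⁻¹ : ℝ) • M).det.re =
        T⁻¹ * T⁻¹ * ((x*q) * ((1-x)*p) - (C/2)^2 * nr) := by
      rw [hdc, Complex.ofReal_re]
    rw [htr, hdet, inv_mul_cancel₀ hTne, one_pow]
    have hA0 : (0:ℝ) ≤ (x * q - (1-x) * p)^2 + C^2 * nr := by positivity
    have harg : 1 - 4 * (T⁻¹ * T⁻¹ * ((x*q) * ((1-x)*p) - (C/2)^2 * nr)) =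
        ((x * q - (1-x) * p)^2 + C^2 * nr) * (T⁻¹)^2 := by
      field_simp
      ring
    rw [harg, Real.sqrt_mul hA0, Real.sqrt_sq (inv_nonneg.mpr hT0)]
    field_simp

lemma passA_eq (x C : ℝ) :
    passiveEnergy ![(-1:ℝ),1] (ptrA (lowerState x C)) = - |1 - 2*x| := by
  rw [ptrA_lowerState]
  have hH : (!![(x:ℂ), 0; 0, 1-(x:ℂ)]).IsHermitian := by
    ext i j
    fin_cases i <;> fin_cases j <;>
      simp [Matrix.conjTranspose_apply, Complex.conj_ofReal]
  rw [herm_passive _ hH]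
  have h1 : (!![(x:ℂ), 0; 0, 1-(x:ℂ)]).trace.re = 1 := by
    simp [Matrix.trace_fin_two]
  have h2 : (!![(x:ℂ), 0; 0, 1-(x:ℂ)]).det.re = x * (1 - x) := by
    rw [Matrix.det_fin_two]
    simp
  rw [h1, h2]
  have : (1:ℝ)^2 - 4 * (x * (1-x)) = (1 - 2*x)^2 := by ring
  rw [this, Real.sqrt_sq_eq_abs]

theorem lowerState_daemonic_gain' (x C : ℝ)
    (hx0 : 0 ≤ x) (hx1 : x ≤ 1) (hC0 : 0 ≤ C)
    (hC : C ≤ 2 * Real.sqrt (x * (1 - x))) :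
    deltaW ![(-1 : ℝ), 1] (lowerState x C) = 1 - |1 - 2*x| := by
  unfold deltaW
  apply IsGreatest.csSup_eq
  constructor
  · -- membership: computational-basis measurement
    refine ⟨2, ![!![(1:ℂ),0;0,0], !![(0:ℂ),0;0,1]], ?_, ?_, ?_, ?_⟩
    · intro a
      fin_cases a <;> (ext i j; fin_cases i <;> fin_cases j <;>
        simp [Matrix.conjTranspose_apply])
    · intro a b
      fin_cases a <;> fin_cases b <;> (ext i j; fin_cases i <;> fin_cases j <;>
        simp [Matrix.mul_apply, Fin.sum_univ_two])
    · ext i j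
      rw [Fin.sum_univ_two]
      fin_cases i <;> fin_cases j <;> simp [Matrix.one_apply]
    · rw [passA_eq, Fin.sum_univ_two]
      have e0 := term_eq x C hx0 hx1 hC0 hC !![(1:ℂ),0;0,0]
        (by ext i j; fin_cases i <;> fin_cases j <;> simp [Matrix.conjTranspose_apply])
        (by ext i j; fin_cases i <;> fin_cases j <;> simp [Matrix.mul_apply, Fin.sum_univ_two])
      have e1 := term_eq x C hx0 hx1 hC0 hC !![(0:ℂ),0;0,1]
        (by ext i j; fin_cases i <;> fin_cases j <;> simp [Matrix.conjTranspose_apply])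
        (by ext i j; fin_cases i <;> fin_cases j <;> simp [Matrix.mul_apply, Fin.sum_univ_two])
      have r0 : ((!![(1:ℂ),0;0,0]) 1 1).re = 0 := by norm_num
      have r1 : ((!![(1:ℂ),0;0,0]) 0 0).re = 1 := by norm_num
      have r2 : Complex.normSq ((!![(1:ℂ),0;0,0]) 0 1) = 0 := by norm_num
      have s0 : ((!![(0:ℂ),0;0,1]) 1 1).re = 1 := by norm_num
      have s1 : ((!![(0:ℂ),0;0,1]) 0 0).re = 0 := by norm_num
      have s2 : Complex.normSq ((!![(0:ℂ),0;0,1]) 0 1) = 0 := by norm_num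
      rw [r0, r1, r2] at e0
      rw [s0, s1, s2] at e1
      rw [show (![!![(1:ℂ),0;0,0], !![(0:ℂ),0;0,1]]) 0 = !![(1:ℂ),0;0,0] from rfl,
        show (![!![(1:ℂ),0;0,0], !![(0:ℂ),0;0,1]]) 1 = !![(0:ℂ),0;0,1] from rfl,
        e0, e1,
        show (x * 0 - (1-x) * 1)^2 + C^2 * 0 = (1-x)^2 by ring,
        show (x * 1 - (1-x) * 0)^2 + C^2 * 0 = x^2 by ring,
        Real.sqrt_sq (by linarith : (0:ℝ) ≤ 1 - x), Real.sqrt_sq hx0]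
      ring
  · -- upper bound
    rintro g ⟨n, P, hPH, hPo, hPs, rfl⟩
    rw [passA_eq]
    have hxx : (0:ℝ) ≤ x * (1 - x) := mul_nonneg hx0 (by linarith)
    have hC2 : C^2 ≤ 4 * (x * (1 - x)) := by
      have := pow_le_pow_left₀ hC0 hC 2
      rw [mul_pow, Real.sq_sqrt hxx] at this
      linarith
    have hbound : ∀ a, -(x * ((P a) 1 1).re + (1-x) * ((P a) 0 0).re) ≤
        outcomeProb (lowerState x C) (P a) *
          passiveEnergy ![(-1:ℝ),1] (condState (lowerState x C) (P a)) := by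
      intro a
      have hsq : P a * P a = P a := by simpa using hPo a a
      obtain ⟨-, -, -, hp0, hq0, hnrle⟩ := proj_facts (P a) (hPH a) hsq
      rw [term_eq x C hx0 hx1 hC0 hC (P a) (hPH a) hsq]
      set p := ((P a) 0 0).re
      set q := ((P a) 1 1).re
      have hnr0 : 0 ≤ Complex.normSq ((P a) 0 1) := Complex.normSq_nonneg _
      have hE : (x * q - (1-x) * p)^2 + C^2 * Complex.normSq ((P a) 0 1) ≤
          (x * q + (1-x) * p)^2 := by
        nlinarith [mul_le_mul hC2 hnrle hnr0 (by linarith : (0:ℝ) ≤ 4 * (x * (1-x))),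
          mul_nonneg hx0 hq0, mul_nonneg (by linarith : (0:ℝ) ≤ 1-x) hp0]
      have := Real.sqrt_le_sqrt hE
      rw [Real.sqrt_sq (add_nonneg (mul_nonneg hx0 hq0)
        (mul_nonneg (by linarith) hp0))] at this
      linarith
    have h11 : ∑ a, ((P a) 1 1).re = 1 := by
      have h := congrFun (congrFun hPs 1) 1
      rw [Matrix.sum_apply] at h
      have := congrArg Complex.re h
      rw [Complex.re_sum] at this
      simpa [Matrix.one_apply] using this
    have h00 : ∑ a, ((P a) 0 0).re = 1 := by
      have h := congrFun (congrFun hPs 0) 0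
      rw [Matrix.sum_apply] at h
      have := congrArg Complex.re h
      rw [Complex.re_sum] at this
      simpa [Matrix.one_apply] using this
    have hsum : ∑ a, -(x * ((P a) 1 1).re + (1-x) * ((P a) 0 0).re) = -1 := by
      have h : ∑ a, -(x * ((P a) 1 1).re + (1-x) * ((P a) 0 0).re) =
          ∑ a, ((-x) * ((P a) 1 1).re + (-(1-x)) * ((P a) 0 0).re) :=
        Finset.sum_congr rfl (fun a _ => by ring)
      rw [h, Finset.sum_add_distrib, ← Finset.mul_sum, ← Finset.mul_sum, h11, h00]
      ring
    have hle := Finset.sum_le_sum (s := Finset.univ) (fun a _ => hbound a)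
    rw [hsum] at hle
    linarith


/-- for the state supported on span{|01⟩,|10⟩} with populations
x, 1−x and coherence C/2, and H_S = −σ_z, the daemonic gain is
δW = 2 − 2x − max{0, 2 − 4x}; for the admissible extremal values
x = (1 ± √(1−C²))/2 this gives δW = 1 − √(1−C²), where C is the
concurrence. -/
theorem lowerState_daemonic_gain (x C : ℝ)
    (hx0 : 0 ≤ x) (hx1 : x ≤ 1) (hC0 : 0 ≤ C)
    (hC : C ≤ 2 * Real.sqrt (x * (1 - x))) :
    deltaW ![(-1 : ℝ), 1] (lowerState x C) = 2 - 2 * x - max 0 (2 - 4 * x) ∧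
    ((x = (1 + Real.sqrt (1 - C ^ 2)) / 2 ∨ x = (1 - Real.sqrt (1 - C ^ 2)) / 2) →
      deltaW ![(-1 : ℝ), 1] (lowerState x C) = 1 - Real.sqrt (1 - C ^ 2)) := by
  have key := lowerState_daemonic_gain' x C hx0 hx1 hC0 hC
  constructor
  · rw [key]
    rcases le_total x (1/2) with h | h
    · rw [abs_of_nonneg (by linarith : (0:ℝ) ≤ 1 - 2*x),
        max_eq_right (by linarith : (0:ℝ) ≤ 2 - 4*x)]
      ring
    · rw [abs_of_nonpos (by linarith : 1 - 2*x ≤ (0:ℝ)),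
        max_eq_left (by linarith : 2 - 4*x ≤ (0:ℝ))]
      ring
  · intro hx
    have hs : 0 ≤ Real.sqrt (1 - C^2) := Real.sqrt_nonneg _
    rcases hx with h | h
    · rw [key, h, show 1 - 2*((1 + Real.sqrt (1 - C^2))/2) = -Real.sqrt (1 - C^2) by ring,
        abs_neg, abs_of_nonneg hs]
    · rw [key, h, show 1 - 2*((1 - Real.sqrt (1 - C^2))/2) = Real.sqrt (1 - C^2) by ring,
        abs_of_nonneg hs]
end
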